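/- arXiv:2508.11496 — 5 statements merged into one kernel-verified Lean document; each statement's English description precedes it below -/
import Mathlib

section
/- For a nonzero vector v ∈ ℂ⁵, all five partial derivatives ∂e₃/∂xᵢ vanish at v if and only if v is a scalar multiple of one of the standard basis vectors e₁,…,e₅. Consequently the singular locus of the cubic threefold Y₁ consists of exactly the five coordinate points [1:0:0:0:0], [0:1:0:0:0], [0:0:1:0:0], [0:0:0:1:0], [0:0:0:0:1], which form a single 𝔄₅-orbit. -/
open Projectivization MvPolynomial

noncomputable section
set_option linter.unnecessarySeqFocus false

/-- ℂ⁵ -/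
abbrev V5 : Type := Fin 5 → ℂ

/-- ℙ⁴ = ℙ(ℂ⁵) -/
abbrev P4 : Type := Projectivization ℂ V5

/-- The linear automorphism of ℂ⁵ induced by a permutation of the coordinates. -/
def permLin (σ : Equiv.Perm (Fin 5)) : V5 ≃ₗ[ℂ] V5 :=
  LinearEquiv.funCongrLeft ℂ ℂ σ

/-- The induced map on ℙ⁴ of a linear automorphism of ℂ⁵. -/
def projMap (γ : V5 ≃ₗ[ℂ] V5) : P4 → P4 :=
  Projectivization.map γ.toLinearMap γ.injective

/-- The 𝔄₅-orbit of a point of ℙ⁴, for the action by even permutations of coordinates. -/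
def A5orbit (p : P4) : Set P4 :=
  { q | ∃ σ ∈ alternatingGroup (Fin 5), q = projMap (permLin σ) p }

/-- The third elementary symmetric function e₃ = Σ_{i<j<k} xᵢxⱼx_k on ℂ⁵. -/
def E3 (v : V5) : ℂ := ∑ s ∈ (Finset.univ : Finset (Fin 5)).powersetCard 3, ∏ i ∈ s, v i

/-- The cubic threefold Y₁ = {e₃ = 0} ⊂ ℙ⁴. -/
def Y1 : Set P4 :=
  { p | ∃ (v : V5) (hv : v ≠ 0), p = Projectivization.mk ℂ v hv ∧ E3 v = 0 }

/-- e₃ = Σ_{i<j<k} xᵢxⱼx_k as a polynomial. -/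
def e3Poly : MvPolynomial (Fin 5) ℂ :=
  ∑ s ∈ (Finset.univ : Finset (Fin 5)).powersetCard 3, ∏ i ∈ s, X i

/-- The set of singular points of the cubic threefold Y₁ = {e₃ = 0}. -/
def SingY1 : Set P4 :=
  { p | ∃ (v : V5) (hv : v ≠ 0), p = Projectivization.mk ℂ v hv ∧
      ∀ i : Fin 5, eval v (pderiv i e3Poly) = 0 }

lemma single_one_ne_zero (i : Fin 5) : (Pi.single i 1 : V5) ≠ 0 := by
  intro h
  have := congrFun h i
  simp at this

/- ### Auxiliary lemmas -/

lemma powerset3 : (Finset.univ : Finset (Fin 5)).powersetCard 3 =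
    ({{0,1,2},{0,1,3},{0,1,4},{0,2,3},{0,2,4},{0,3,4},{1,2,3},{1,2,4},{1,3,4},{2,3,4}} :
      Finset (Finset (Fin 5))) := by decide

set_option maxHeartbeats 1000000 in
lemma e3Poly_eq : e3Poly = X 0*X 1*X 2 + X 0*X 1*X 3 + X 0*X 1*X 4 + X 0*X 2*X 3 + X 0*X 2*X 4
    + X 0*X 3*X 4 + X 1*X 2*X 3 + X 1*X 2*X 4 + X 1*X 3*X 4 + X 2*X 3*X 4 := by
  rw [e3Poly, powerset3]
  simp (config := { decide := true }) only [Finset.sum_insert, Finset.sum_singleton,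
    Finset.prod_insert, Finset.prod_singleton, Finset.mem_insert, Finset.mem_singleton]
  ring

lemma eval_pd0 (v : V5) : eval v (pderiv 0 e3Poly) =
    v 1*v 2 + v 1*v 3 + v 1*v 4 + v 2*v 3 + v 2*v 4 + v 3*v 4 := by
  simp (config := { decide := true }) [e3Poly_eq, pderiv_mul, pderiv_X, Pi.single_apply]
  all_goals ring

lemma eval_pd1 (v : V5) : eval v (pderiv 1 e3Poly) =
    v 0*v 2 + v 0*v 3 + v 0*v 4 + v 2*v 3 + v 2*v 4 + v 3*v 4 := by
  simp (config := { decide := true }) [e3Poly_eq, pderiv_mul, pderiv_X, Pi.single_apply]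
  all_goals ring

lemma eval_pd2 (v : V5) : eval v (pderiv 2 e3Poly) =
    v 0*v 1 + v 0*v 3 + v 0*v 4 + v 1*v 3 + v 1*v 4 + v 3*v 4 := by
  simp (config := { decide := true }) [e3Poly_eq, pderiv_mul, pderiv_X, Pi.single_apply]
  all_goals ring

lemma eval_pd3 (v : V5) : eval v (pderiv 3 e3Poly) =
    v 0*v 1 + v 0*v 2 + v 0*v 4 + v 1*v 2 + v 1*v 4 + v 2*v 4 := by
  simp (config := { decide := true }) [e3Poly_eq, pderiv_mul, pderiv_X, Pi.single_apply]
  all_goals ring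

lemma eval_pd4 (v : V5) : eval v (pderiv 4 e3Poly) =
    v 0*v 1 + v 0*v 2 + v 0*v 3 + v 1*v 2 + v 1*v 3 + v 2*v 3 := by
  simp (config := { decide := true }) [e3Poly_eq, pderiv_mul, pderiv_X, Pi.single_apply]

set_option maxHeartbeats 1600000 in
/-- The key characterization of critical points of e₃. -/
lemma crit_iff (v : V5) (hv : v ≠ 0) :
    (∀ i : Fin 5, eval v (pderiv i e3Poly) = 0) ↔
      ∃ (c : ℂ) (i : Fin 5), v = c • (Pi.single i 1 : V5) := by
  constructor
  · intro h
    have hd0 : v 1*v 2 + v 1*v 3 + v 1*v 4 + v 2*v 3 + v 2*v 4 + v 3*v 4 = 0 := by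
      rw [← eval_pd0]; exact h 0
    have hd1 : v 0*v 2 + v 0*v 3 + v 0*v 4 + v 2*v 3 + v 2*v 4 + v 3*v 4 = 0 := by
      rw [← eval_pd1]; exact h 1
    have hd2 : v 0*v 1 + v 0*v 3 + v 0*v 4 + v 1*v 3 + v 1*v 4 + v 3*v 4 = 0 := by
      rw [← eval_pd2]; exact h 2
    have hd3 : v 0*v 1 + v 0*v 2 + v 0*v 4 + v 1*v 2 + v 1*v 4 + v 2*v 4 = 0 := by
      rw [← eval_pd3]; exact h 3
    have hd4 : v 0*v 1 + v 0*v 2 + v 0*v 3 + v 1*v 2 + v 1*v 3 + v 2*v 3 = 0 := by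
      rw [← eval_pd4]; exact h 4
    have k0 : v 0 * ((v 0+v 1+v 2+v 3+v 4) - v 0) = 0 := by
      linear_combination (hd0+hd1+hd2+hd3+hd4)/3 - hd0
    have k1 : v 1 * ((v 0+v 1+v 2+v 3+v 4) - v 1) = 0 := by
      linear_combination (hd0+hd1+hd2+hd3+hd4)/3 - hd1
    have k2 : v 2 * ((v 0+v 1+v 2+v 3+v 4) - v 2) = 0 := by
      linear_combination (hd0+hd1+hd2+hd3+hd4)/3 - hd2
    have k3 : v 3 * ((v 0+v 1+v 2+v 3+v 4) - v 3) = 0 := by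
      linear_combination (hd0+hd1+hd2+hd3+hd4)/3 - hd3
    have k4 : v 4 * ((v 0+v 1+v 2+v 3+v 4) - v 4) = 0 := by
      linear_combination (hd0+hd1+hd2+hd3+hd4)/3 - hd4
    have hsne : (v 0+v 1+v 2+v 3+v 4) ≠ 0 := by
      intro h0
      apply hv
      have z0 : v 0 = 0 := mul_self_eq_zero.1 (by linear_combination -k0 + v 0 * h0)
      have z1 : v 1 = 0 := mul_self_eq_zero.1 (by linear_combination -k1 + v 1 * h0)
      have z2 : v 2 = 0 := mul_self_eq_zero.1 (by linear_combination -k2 + v 2 * h0)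
      have z3 : v 3 = 0 := mul_self_eq_zero.1 (by linear_combination -k3 + v 3 * h0)
      have z4 : v 4 = 0 := mul_self_eq_zero.1 (by linear_combination -k4 + v 4 * h0)
      funext j
      fin_cases j <;> simp [z0, z1, z2, z3, z4]
    have c0 : v 0 = 0 ∨ v 0 = v 0+v 1+v 2+v 3+v 4 := by
      rcases mul_eq_zero.1 k0 with hh | hh
      exacts [Or.inl hh, Or.inr (by linear_combination -hh)]
    have c1 : v 1 = 0 ∨ v 1 = v 0+v 1+v 2+v 3+v 4 := by
      rcases mul_eq_zero.1 k1 with hh | hh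
      exacts [Or.inl hh, Or.inr (by linear_combination -hh)]
    have c2 : v 2 = 0 ∨ v 2 = v 0+v 1+v 2+v 3+v 4 := by
      rcases mul_eq_zero.1 k2 with hh | hh
      exacts [Or.inl hh, Or.inr (by linear_combination -hh)]
    have c3 : v 3 = 0 ∨ v 3 = v 0+v 1+v 2+v 3+v 4 := by
      rcases mul_eq_zero.1 k3 with hh | hh
      exacts [Or.inl hh, Or.inr (by linear_combination -hh)]
    have c4 : v 4 = 0 ∨ v 4 = v 0+v 1+v 2+v 3+v 4 := by
      rcases mul_eq_zero.1 k4 with hh | hh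
      exacts [Or.inl hh, Or.inr (by linear_combination -hh)]
    clear k0 k1 k2 k3 k4 hd0 hd1 hd2 hd3 hd4 h
    rcases c0 with h0 | h0 <;> rcases c1 with h1 | h1 <;> rcases c2 with h2 | h2 <;>
      rcases c3 with h3 | h3 <;> rcases c4 with h4 | h4 <;>
      first
      | (refine ⟨v 0, 0, ?_⟩
         funext j; fin_cases j <;>
            simp only [Pi.smul_apply, Pi.single_apply, smul_eq_mul] <;>
            norm_num [Fin.ext_iff] <;>
            first | exact h0 | exact h1 | exact h2 | exact h3 | exact h4 | rfl)
      | (refine ⟨v 1, 1, ?_⟩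
         funext j; fin_cases j <;>
            simp only [Pi.smul_apply, Pi.single_apply, smul_eq_mul] <;>
            norm_num [Fin.ext_iff] <;>
            first | exact h0 | exact h1 | exact h2 | exact h3 | exact h4 | rfl)
      | (refine ⟨v 2, 2, ?_⟩
         funext j; fin_cases j <;>
            simp only [Pi.smul_apply, Pi.single_apply, smul_eq_mul] <;>
            norm_num [Fin.ext_iff] <;>
            first | exact h0 | exact h1 | exact h2 | exact h3 | exact h4 | rfl)
      | (refine ⟨v 3, 3, ?_⟩
         funext j; fin_cases j <;>
            simp only [Pi.smul_apply, Pi.single_apply, smul_eq_mul] <;>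
            norm_num [Fin.ext_iff] <;>
            first | exact h0 | exact h1 | exact h2 | exact h3 | exact h4 | rfl)
      | (refine ⟨v 4, 4, ?_⟩
         funext j; fin_cases j <;>
            simp only [Pi.smul_apply, Pi.single_apply, smul_eq_mul] <;>
            norm_num [Fin.ext_iff] <;>
            first | exact h0 | exact h1 | exact h2 | exact h3 | exact h4 | rfl)
      | exact absurd (show v 0+v 1+v 2+v 3+v 4 = 0 by
          first
          | linear_combination h0+h1+h2+h3+h4
          | linear_combination -(h0+h1+h2+h3+h4)
          | linear_combination -(h0+h1+h2+h3+h4)/2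
          | linear_combination -(h0+h1+h2+h3+h4)/3
          | linear_combination -(h0+h1+h2+h3+h4)/4) hsne
  · rintro ⟨c, i, rfl⟩ j
    rw [e3Poly_eq]
    simp only [map_add, map_mul, pderiv_mul, pderiv_X, eval_add, eval_mul, eval_X]
    fin_cases i <;> fin_cases j <;>
      simp (config := { decide := true }) [Pi.single_apply]

lemma projMap_mk (σ : Equiv.Perm (Fin 5)) (v : V5) (hv : v ≠ 0) :
    projMap (permLin σ) (Projectivization.mk ℂ v hv) =
      Projectivization.mk ℂ (v ∘ σ)
        (fun h => hv (by funext j; simpa using congrFun h (σ.symm j))) :=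
  rfl

lemma single_comp_perm (σ : Equiv.Perm (Fin 5)) :
    (Pi.single 0 1 : V5) ∘ σ = (Pi.single (σ⁻¹ 0) 1 : V5) := by
  funext j
  show (Pi.single 0 1 : V5) (σ j) = _
  rcases eq_or_ne (σ j) 0 with h | h
  · rw [h, ← Equiv.Perm.eq_inv_iff_eq.2 h]; simp
  · rw [Pi.single_apply, Pi.single_apply, if_neg (by simpa [eq_comm] using h),
      if_neg (fun hj => h (by rw [hj]; simp))]

lemma SingY1_eq_pts :
    SingY1 = { p : P4 | ∃ i : Fin 5,
      p = Projectivization.mk ℂ (Pi.single i 1) (single_one_ne_zero i) } := by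
  ext p
  constructor
  · rintro ⟨v, hv, rfl, hd⟩
    obtain ⟨c, i, rfl⟩ := (crit_iff v hv).1 hd
    have hc : c ≠ 0 := by rintro rfl; simp at hv
    refine ⟨i, ?_⟩
    rw [Projectivization.mk_eq_mk_iff']
    exact ⟨c, rfl⟩
  · rintro ⟨i, rfl⟩
    exact ⟨Pi.single i 1, single_one_ne_zero i, rfl,
      (crit_iff _ (single_one_ne_zero i)).2 ⟨1, i, (one_smul _ _).symm⟩⟩

lemma SingY1_eq_orbit :
    SingY1 = A5orbit (Projectivization.mk ℂ (Pi.single 0 1) (single_one_ne_zero 0)) := by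
  rw [SingY1_eq_pts]
  ext p
  constructor
  · rintro ⟨i, rfl⟩
    fin_cases i
    · refine ⟨1, one_mem _, ?_⟩
      rw [projMap_mk]
      rw [Projectivization.mk_eq_mk_iff']
      exact ⟨1, by funext j; fin_cases j <;> simp⟩
    · refine ⟨(finRotate 5)^4, ?_, ?_⟩
      · rw [Equiv.Perm.mem_alternatingGroup]; decide
      · rw [projMap_mk, Projectivization.mk_eq_mk_iff']
        exact ⟨1, by rw [one_smul]; funext j; fin_cases j <;> rfl⟩
    · refine ⟨(finRotate 5)^3, ?_, ?_⟩
      · rw [Equiv.Perm.mem_alternatingGroup]; decide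
      · rw [projMap_mk, Projectivization.mk_eq_mk_iff']
        exact ⟨1, by rw [one_smul]; funext j; fin_cases j <;> rfl⟩
    · refine ⟨(finRotate 5)^2, ?_, ?_⟩
      · rw [Equiv.Perm.mem_alternatingGroup]; decide
      · rw [projMap_mk, Projectivization.mk_eq_mk_iff']
        exact ⟨1, by rw [one_smul]; funext j; fin_cases j <;> rfl⟩
    · refine ⟨finRotate 5, ?_, ?_⟩
      · rw [Equiv.Perm.mem_alternatingGroup]; decide
      · rw [projMap_mk, Projectivization.mk_eq_mk_iff']
        exact ⟨1, by rw [one_smul]; funext j; fin_cases j <;> rfl⟩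
  · rintro ⟨σ, -, rfl⟩
    refine ⟨σ⁻¹ 0, ?_⟩
    rw [projMap_mk, Projectivization.mk_eq_mk_iff']
    exact ⟨1, by rw [one_smul, single_comp_perm]⟩

lemma pts_injective : Function.Injective
    (fun i : Fin 5 => Projectivization.mk ℂ (Pi.single i 1 : V5) (single_one_ne_zero i)) := by
  intro i j hij
  by_contra hne
  rw [Projectivization.mk_eq_mk_iff'] at hij
  obtain ⟨a, ha⟩ := hij
  have h1 := congrFun ha i
  have h2 := congrFun ha j
  simp [Pi.single_apply, hne, Ne.symm hne] at h1 h2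

/-- The singular locus of Y₁ is the set of the five coordinate points of ℙ⁴,
which form a single 𝔄₅-orbit. -/
theorem statement7 :
    (∀ v : V5, v ≠ 0 →
      ((∀ i : Fin 5, eval v (pderiv i e3Poly) = 0) ↔
        ∃ (c : ℂ) (i : Fin 5), v = c • (Pi.single i 1 : V5))) ∧
    SingY1 = { p : P4 | ∃ i : Fin 5, p = Projectivization.mk ℂ (Pi.single i 1) (single_one_ne_zero i) } ∧
    SingY1 = A5orbit (Projectivization.mk ℂ (Pi.single 0 1) (single_one_ne_zero 0)) ∧
    SingY1.ncard = 5 := by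
  refine ⟨crit_iff, SingY1_eq_pts, SingY1_eq_orbit, ?_⟩
  rw [SingY1_eq_pts]
  have : { p : P4 | ∃ i : Fin 5,
      p = Projectivization.mk ℂ (Pi.single i 1) (single_one_ne_zero i) } =
      Set.range (fun i : Fin 5 =>
        Projectivization.mk ℂ (Pi.single i 1 : V5) (single_one_ne_zero i)) := by
    ext p; simp [eq_comm, Set.range]
  rw [this, ← Set.image_univ, Set.ncard_image_of_injective _ pts_injective, Set.ncard_univ]
  simp
end
end

section
/- The subgroup Γ of GL(ℂ⁵) generated by the two linear maps g₁ and g₂ is isomorphic to the alternating group 𝔄₅; in particular Γ has order 60. -/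
open Projectivization MvPolynomial

noncomputable section
set_option linter.unnecessarySeqFocus false

/-- g₁(x₁,…,x₅) = (x₄, x₁, x₅, x₂, −x₁−x₂−x₃−x₄−x₅). -/
def g1 : V5 ≃ₗ[ℂ] V5 where
  toFun x := ![x 3, x 0, x 4, x 1, -(x 0 + x 1 + x 2 + x 3 + x 4)]
  map_add' a b := by funext i; fin_cases i <;> simp <;> ring
  map_smul' c a := by funext i; fin_cases i <;> simp <;> ring
  invFun y := ![y 1, y 3, -(y 0 + y 1 + y 2 + y 3 + y 4), y 0, y 2]
  left_inv x := by funext i; fin_cases i <;> simp <;> ring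
  right_inv y := by funext i; fin_cases i <;> simp <;> ring

/-- g₂(x₁,…,x₅) = (x₄, −x₁−x₂−x₃−x₄−x₅, x₁, x₃, x₂). -/
def g2 : V5 ≃ₗ[ℂ] V5 where
  toFun x := ![x 3, -(x 0 + x 1 + x 2 + x 3 + x 4), x 0, x 2, x 1]
  map_add' a b := by funext i; fin_cases i <;> simp <;> ring
  map_smul' c a := by funext i; fin_cases i <;> simp <;> ring
  invFun y := ![y 2, y 4, y 3, y 0, -(y 0 + y 1 + y 2 + y 3 + y 4)]
  left_inv x := by funext i; fin_cases i <;> simp <;> ring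
  right_inv y := by funext i; fin_cases i <;> simp <;> ring

/-- Γ ⊂ GL(ℂ⁵) is the subgroup generated by g₁ and g₂. -/
def Gamma : Subgroup (V5 ≃ₗ[ℂ] V5) := Subgroup.closure {g1, g2}

/-- The Γ-orbit of a point of ℙ⁴. -/
def GammaOrbit (p : P4) : Set P4 :=
  { q | ∃ γ ∈ Gamma, q = projMap γ p }

/-- The quadratic form q = Σ_{1≤i≤j≤5} xᵢxⱼ. -/
def qQ (v : V5) : ℂ := ∑ i, ∑ j, if i ≤ j then v i * v j else 0

/-- The quadric threefold X₂ = {q = 0} ⊂ ℙ⁴. -/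
def X2 : Set P4 :=
  { p | ∃ (v : V5) (hv : v ≠ 0), p = Projectivization.mk ℂ v hv ∧ qQ v = 0 }


namespace S9
open Equiv Equiv.Perm Subgroup

/-! ### The 5-dimensional representation of `Perm (Fin 6)` -/

def ext5 (x : V5) : Fin 6 → ℂ := ![x 0, x 1, x 2, x 3, x 4, -(x 0 + x 1 + x 2 + x 3 + x 4)]

lemma ext5_castSucc (x : V5) (i : Fin 5) : ext5 x i.castSucc = x i := by
  fin_cases i <;> rfl

lemma ext5_last (x : V5) : ext5 x (Fin.last 5) = -(x 0 + x 1 + x 2 + x 3 + x 4) := rfl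

lemma ext5_sum (x : V5) : ∑ j, ext5 x j = 0 := by
  rw [Fin.sum_univ_six]
  show x 0 + x 1 + x 2 + x 3 + x 4 + -(x 0 + x 1 + x 2 + x 3 + x 4) = 0
  ring

lemma ext5_add (a b : V5) : ext5 (a + b) = ext5 a + ext5 b := by
  funext j
  induction j using Fin.lastCases with
  | last => simp only [ext5_last, Pi.add_apply, ext5_last]; ring
  | cast i => simp only [ext5_castSucc, Pi.add_apply, ext5_castSucc]

lemma ext5_smul (c : ℂ) (a : V5) : ext5 (c • a) = c • ext5 a := by
  funext j
  induction j using Fin.lastCases with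
  | last => simp only [ext5_last, Pi.smul_apply, smul_eq_mul, ext5_last]; ring
  | cast i => simp only [ext5_castSucc, Pi.smul_apply, ext5_castSucc]

def Al (π : Perm (Fin 6)) : V5 →ₗ[ℂ] V5 where
  toFun x := fun i => ext5 x (π i.castSucc)
  map_add' a b := by
    funext i
    show ext5 (a + b) (π i.castSucc) = ext5 a (π i.castSucc) + ext5 b (π i.castSucc)
    rw [ext5_add]; rfl
  map_smul' c a := by
    funext i
    show ext5 (c • a) (π i.castSucc) = c • ext5 a (π i.castSucc)
    rw [ext5_smul]; rfl

lemma Al_apply (π : Perm (Fin 6)) (x : V5) (i : Fin 5) :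
    Al π x i = ext5 x (π i.castSucc) := rfl

lemma ext5_Al (π : Perm (Fin 6)) (x : V5) (j : Fin 6) :
    ext5 (Al π x) j = ext5 x (π j) := by
  induction j using Fin.lastCases with
  | last =>
      have h := ext5_sum x
      rw [← Equiv.sum_comp π (ext5 x), Fin.sum_univ_castSucc, Fin.sum_univ_five] at h
      rw [ext5_last]
      simp only [Al_apply]
      linear_combination -h
  | cast i => rw [ext5_castSucc, Al_apply]

lemma Al_Al (π τ : Perm (Fin 6)) (x : V5) : Al π (Al τ x) = Al (τ * π) x := by
  funext i
  rw [Al_apply, ext5_Al, Al_apply, Perm.mul_apply]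

lemma Al_one (x : V5) : Al 1 x = x := by
  funext i
  rw [Al_apply, Perm.one_apply, ext5_castSucc]

/-- The 5-dimensional representation of `Perm (Fin 6)`. -/
def phi : Perm (Fin 6) →* (V5 ≃ₗ[ℂ] V5) where
  toFun π := LinearEquiv.ofLinear (Al π⁻¹) (Al π)
    (by apply LinearMap.ext; intro x
        show Al π⁻¹ (Al π x) = x
        rw [Al_Al, mul_inv_cancel, Al_one])
    (by apply LinearMap.ext; intro x
        show Al π (Al π⁻¹ x) = x
        rw [Al_Al, inv_mul_cancel, Al_one])
  map_one' := by
    apply LinearEquiv.toLinearMap_injective; apply LinearMap.ext; intro x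
    show Al (1 : Perm (Fin 6))⁻¹ x = x
    rw [inv_one, Al_one]
  map_mul' π ρ := by
    apply LinearEquiv.toLinearMap_injective; apply LinearMap.ext; intro x
    show Al (π * ρ)⁻¹ x = Al π⁻¹ (Al ρ⁻¹ x)
    rw [Al_Al, mul_inv_rev]

lemma phi_apply (π : Perm (Fin 6)) (x : V5) : phi π x = Al π⁻¹ x := rfl

def xw : V5 := ![1, 2, 3, 4, 5]

lemma ext5_xw_inj : Function.Injective (ext5 xw) := by
  intro a b hab
  fin_cases a <;> fin_cases b <;>
    first
      | rfl
      | (exfalso; simp only [ext5, xw] at hab; norm_num [Matrix.cons_val_zero,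
          Matrix.cons_val_one, Matrix.cons_val_two, Matrix.cons_val_three, Matrix.cons_val_four] at hab)

lemma phi_inj : Function.Injective phi := by
  intro π ρ h
  have hx : ∀ i : Fin 5, π⁻¹ i.castSucc = ρ⁻¹ i.castSucc := by
    intro i
    apply ext5_xw_inj
    have := congrArg (fun e : V5 ≃ₗ[ℂ] V5 => e xw i) h
    simpa only [phi_apply, Al_apply] using this
  have hinv : π⁻¹ = ρ⁻¹ := by
    apply Equiv.ext
    intro j
    induction j using Fin.lastCases with
    | cast i => exact hx i
    | last =>
        obtain ⟨j, hj⟩ := (ρ⁻¹ : Perm (Fin 6)).surjective (π⁻¹ (Fin.last 5))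
        induction j using Fin.lastCases with
        | last => exact hj.symm
        | cast i =>
            exfalso
            rw [← hx i] at hj
            have := (π⁻¹ : Perm (Fin 6)).injective hj
            exact absurd this (Fin.castSucc_lt_last i).ne
  exact inv_injective hinv

/-! ### The exotic embedding of `Perm (Fin 5)` into `Perm (Fin 6)`, via a lookup table -/

def mkP6 (v w : Fin 6 → Fin 6) (h1 : ∀ i, w (v i) = i) (h2 : ∀ i, v (w i) = i) :
    Equiv.Perm (Fin 6) := ⟨v, w, h1, h2⟩

def q194 : Equiv.Perm (Fin 6) := mkP6 ![0,4,3,2,1,5] ![0,4,3,2,1,5] (by decide) (by decide)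
def q198 : Equiv.Perm (Fin 6) := mkP6 ![4,0,2,3,5,1] ![1,5,2,3,0,4] (by decide) (by decide)
def q214 : Equiv.Perm (Fin 6) := mkP6 ![2,5,1,0,3,4] ![3,2,0,4,5,1] (by decide) (by decide)
def q222 : Equiv.Perm (Fin 6) := mkP6 ![5,2,0,1,4,3] ![2,3,1,5,4,0] (by decide) (by decide)
def q238 : Equiv.Perm (Fin 6) := mkP6 ![3,1,5,4,2,0] ![5,1,4,0,3,2] (by decide) (by decide)
def q242 : Equiv.Perm (Fin 6) := mkP6 ![1,3,4,5,0,2] ![4,0,5,1,2,3] (by decide) (by decide)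
def q294 : Equiv.Perm (Fin 6) := mkP6 ![3,2,0,4,5,1] ![2,5,1,0,3,4] (by decide) (by decide)
def q298 : Equiv.Perm (Fin 6) := mkP6 ![2,3,4,0,1,5] ![3,4,0,1,2,5] (by decide) (by decide)
def q334 : Equiv.Perm (Fin 6) := mkP6 ![4,1,5,3,0,2] ![4,1,5,3,0,2] (by decide) (by decide)
def q346 : Equiv.Perm (Fin 6) := mkP6 ![1,4,3,5,2,0] ![5,0,4,2,1,3] (by decide) (by decide)
def q358 : Equiv.Perm (Fin 6) := mkP6 ![0,5,1,2,4,3] ![0,2,3,5,4,1] (by decide) (by decide)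
def q366 : Equiv.Perm (Fin 6) := mkP6 ![5,0,2,1,3,4] ![1,3,2,4,5,0] (by decide) (by decide)
def q414 : Equiv.Perm (Fin 6) := mkP6 ![1,0,2,5,4,3] ![1,0,2,5,4,3] (by decide) (by decide)
def q422 : Equiv.Perm (Fin 6) := mkP6 ![0,1,5,2,3,4] ![0,1,3,4,5,2] (by decide) (by decide)
def q434 : Equiv.Perm (Fin 6) := mkP6 ![5,3,4,1,2,0] ![5,3,4,1,2,0] (by decide) (by decide)
def q446 : Equiv.Perm (Fin 6) := mkP6 ![3,5,1,4,0,2] ![4,2,5,0,3,1] (by decide) (by decide)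
def q482 : Equiv.Perm (Fin 6) := mkP6 ![2,4,3,0,5,1] ![3,5,0,2,1,4] (by decide) (by decide)
def q486 : Equiv.Perm (Fin 6) := mkP6 ![4,2,0,3,1,5] ![2,4,1,3,0,5] (by decide) (by decide)
def q538 : Equiv.Perm (Fin 6) := mkP6 ![5,4,3,1,0,2] ![4,3,5,2,1,0] (by decide) (by decide)
def q542 : Equiv.Perm (Fin 6) := mkP6 ![4,5,1,3,2,0] ![5,2,4,3,0,1] (by decide) (by decide)
def q558 : Equiv.Perm (Fin 6) := mkP6 ![1,2,0,5,3,4] ![2,0,1,4,5,3] (by decide) (by decide)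
def q566 : Equiv.Perm (Fin 6) := mkP6 ![2,1,5,0,4,3] ![3,1,0,5,4,2] (by decide) (by decide)
def q582 : Equiv.Perm (Fin 6) := mkP6 ![3,0,2,4,1,5] ![1,4,2,0,3,5] (by decide) (by decide)
def q586 : Equiv.Perm (Fin 6) := mkP6 ![0,3,4,2,5,1] ![0,5,3,1,2,4] (by decide) (by decide)
def q694 : Equiv.Perm (Fin 6) := mkP6 ![1,5,2,3,0,4] ![4,0,2,3,5,1] (by decide) (by decide)
def q698 : Equiv.Perm (Fin 6) := mkP6 ![5,1,3,2,4,0] ![5,1,3,2,4,0] (by decide) (by decide)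
def q714 : Equiv.Perm (Fin 6) := mkP6 ![3,4,0,1,2,5] ![2,3,4,0,1,5] (by decide) (by decide)
def q722 : Equiv.Perm (Fin 6) := mkP6 ![4,3,1,0,5,2] ![3,2,5,1,0,4] (by decide) (by decide)
def q738 : Equiv.Perm (Fin 6) := mkP6 ![2,0,4,5,3,1] ![1,5,0,4,2,3] (by decide) (by decide)
def q742 : Equiv.Perm (Fin 6) := mkP6 ![0,2,5,4,1,3] ![0,4,1,5,3,2] (by decide) (by decide)
def q894 : Equiv.Perm (Fin 6) := mkP6 ![2,3,1,5,4,0] ![5,2,0,1,4,3] (by decide) (by decide)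
def q898 : Equiv.Perm (Fin 6) := mkP6 ![3,2,5,1,0,4] ![4,3,1,0,5,2] (by decide) (by decide)
def q954 : Equiv.Perm (Fin 6) := mkP6 ![5,0,4,2,1,3] ![1,4,3,5,2,0] (by decide) (by decide)
def q970 : Equiv.Perm (Fin 6) := mkP6 ![0,5,2,4,3,1] ![0,5,2,4,3,1] (by decide) (by decide)
def q978 : Equiv.Perm (Fin 6) := mkP6 ![1,4,0,3,5,2] ![2,0,5,3,1,4] (by decide) (by decide)
def q990 : Equiv.Perm (Fin 6) := mkP6 ![4,1,3,0,2,5] ![3,1,4,2,0,5] (by decide) (by decide)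
def q1014 : Equiv.Perm (Fin 6) := mkP6 ![0,1,3,4,5,2] ![0,1,5,2,3,4] (by decide) (by decide)
def q1022 : Equiv.Perm (Fin 6) := mkP6 ![1,0,4,3,2,5] ![1,0,4,3,2,5] (by decide) (by decide)
def q1054 : Equiv.Perm (Fin 6) := mkP6 ![4,2,5,0,3,1] ![3,5,1,4,0,2] (by decide) (by decide)
def q1070 : Equiv.Perm (Fin 6) := mkP6 ![2,4,0,5,1,3] ![2,4,0,5,1,3] (by decide) (by decide)
def q1102 : Equiv.Perm (Fin 6) := mkP6 ![3,5,2,1,4,0] ![5,3,2,0,4,1] (by decide) (by decide)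
def q1110 : Equiv.Perm (Fin 6) := mkP6 ![5,3,1,2,0,4] ![4,2,3,1,5,0] (by decide) (by decide)
def q1138 : Equiv.Perm (Fin 6) := mkP6 ![4,5,2,0,1,3] ![3,4,2,5,0,1] (by decide) (by decide)
def q1142 : Equiv.Perm (Fin 6) := mkP6 ![5,4,0,2,3,1] ![2,5,3,4,1,0] (by decide) (by decide)
def q1178 : Equiv.Perm (Fin 6) := mkP6 ![0,3,1,4,2,5] ![0,2,4,1,3,5] (by decide) (by decide)
def q1190 : Equiv.Perm (Fin 6) := mkP6 ![3,0,4,1,5,2] ![1,3,5,0,2,4] (by decide) (by decide)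
def q1202 : Equiv.Perm (Fin 6) := mkP6 ![2,1,3,5,0,4] ![4,1,0,2,5,3] (by decide) (by decide)
def q1210 : Equiv.Perm (Fin 6) := mkP6 ![1,2,5,3,4,0] ![5,0,1,3,4,2] (by decide) (by decide)
def q1294 : Equiv.Perm (Fin 6) := mkP6 ![5,1,4,0,3,2] ![3,1,5,4,2,0] (by decide) (by decide)
def q1298 : Equiv.Perm (Fin 6) := mkP6 ![1,5,0,4,2,3] ![2,0,4,5,3,1] (by decide) (by decide)
def q1334 : Equiv.Perm (Fin 6) := mkP6 ![0,2,3,5,4,1] ![0,5,1,2,4,3] (by decide) (by decide)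
def q1346 : Equiv.Perm (Fin 6) := mkP6 ![2,0,5,3,1,4] ![1,4,0,3,5,2] (by decide) (by decide)
def q1358 : Equiv.Perm (Fin 6) := mkP6 ![4,3,2,1,0,5] ![4,3,2,1,0,5] (by decide) (by decide)
def q1366 : Equiv.Perm (Fin 6) := mkP6 ![3,4,1,2,5,0] ![5,2,3,0,1,4] (by decide) (by decide)
def q1394 : Equiv.Perm (Fin 6) := mkP6 ![4,0,5,1,2,3] ![1,3,4,5,0,2] (by decide) (by decide)
def q1398 : Equiv.Perm (Fin 6) := mkP6 ![0,4,1,5,3,2] ![0,2,5,4,1,3] (by decide) (by decide)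
def q1454 : Equiv.Perm (Fin 6) := mkP6 ![1,3,2,4,5,0] ![5,0,2,1,3,4] (by decide) (by decide)
def q1470 : Equiv.Perm (Fin 6) := mkP6 ![3,1,4,2,0,5] ![4,1,3,0,2,5] (by decide) (by decide)
def q1478 : Equiv.Perm (Fin 6) := mkP6 ![5,2,3,0,1,4] ![3,4,1,2,5,0] (by decide) (by decide)
def q1490 : Equiv.Perm (Fin 6) := mkP6 ![2,5,0,3,4,1] ![2,5,0,3,4,1] (by decide) (by decide)
def q1634 : Equiv.Perm (Fin 6) := mkP6 ![3,5,0,2,1,4] ![2,4,3,0,5,1] (by decide) (by decide)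
def q1646 : Equiv.Perm (Fin 6) := mkP6 ![5,3,2,0,4,1] ![3,5,2,1,4,0] (by decide) (by decide)
def q1654 : Equiv.Perm (Fin 6) := mkP6 ![2,4,1,3,0,5] ![4,2,0,3,1,5] (by decide) (by decide)
def q1670 : Equiv.Perm (Fin 6) := mkP6 ![4,2,3,1,5,0] ![5,3,1,2,0,4] (by decide) (by decide)
def q1726 : Equiv.Perm (Fin 6) := mkP6 ![0,1,4,5,2,3] ![0,1,4,5,2,3] (by decide) (by decide)
def q1730 : Equiv.Perm (Fin 6) := mkP6 ![1,0,5,4,3,2] ![1,0,5,4,3,2] (by decide) (by decide)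
def q1758 : Equiv.Perm (Fin 6) := mkP6 ![2,1,4,3,5,0] ![5,1,0,3,2,4] (by decide) (by decide)
def q1766 : Equiv.Perm (Fin 6) := mkP6 ![1,2,3,4,0,5] ![4,0,1,2,3,5] (by decide) (by decide)
def q1778 : Equiv.Perm (Fin 6) := mkP6 ![3,0,5,2,4,1] ![1,5,3,0,4,2] (by decide) (by decide)
def q1790 : Equiv.Perm (Fin 6) := mkP6 ![0,3,2,5,1,4] ![0,4,2,1,5,3] (by decide) (by decide)
def q1826 : Equiv.Perm (Fin 6) := mkP6 ![4,5,0,1,3,2] ![2,3,5,4,0,1] (by decide) (by decide)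
def q1830 : Equiv.Perm (Fin 6) := mkP6 ![5,4,1,0,2,3] ![3,2,4,5,1,0] (by decide) (by decide)
def q1914 : Equiv.Perm (Fin 6) := mkP6 ![4,3,5,2,1,0] ![5,4,3,1,0,2] (by decide) (by decide)
def q1922 : Equiv.Perm (Fin 6) := mkP6 ![3,4,2,5,0,1] ![4,5,2,0,1,3] (by decide) (by decide)
def q1934 : Equiv.Perm (Fin 6) := mkP6 ![2,0,1,4,5,3] ![1,2,0,5,3,4] (by decide) (by decide)
def q1946 : Equiv.Perm (Fin 6) := mkP6 ![0,2,4,1,3,5] ![0,3,1,4,2,5] (by decide) (by decide)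
def q1982 : Equiv.Perm (Fin 6) := mkP6 ![5,1,0,3,2,4] ![2,1,4,3,5,0] (by decide) (by decide)
def q1986 : Equiv.Perm (Fin 6) := mkP6 ![1,5,3,0,4,2] ![3,0,5,2,4,1] (by decide) (by decide)
def q2014 : Equiv.Perm (Fin 6) := mkP6 ![5,2,4,3,0,1] ![4,5,1,3,2,0] (by decide) (by decide)
def q2022 : Equiv.Perm (Fin 6) := mkP6 ![2,5,3,4,1,0] ![5,4,0,2,3,1] (by decide) (by decide)
def q2054 : Equiv.Perm (Fin 6) := mkP6 ![3,1,0,5,4,2] ![2,1,5,0,4,3] (by decide) (by decide)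
def q2070 : Equiv.Perm (Fin 6) := mkP6 ![1,3,5,0,2,4] ![3,0,4,1,5,2] (by decide) (by decide)
def q2102 : Equiv.Perm (Fin 6) := mkP6 ![4,0,1,2,3,5] ![1,2,3,4,0,5] (by decide) (by decide)
def q2110 : Equiv.Perm (Fin 6) := mkP6 ![0,4,2,1,5,3] ![0,3,2,5,1,4] (by decide) (by decide)
def q2134 : Equiv.Perm (Fin 6) := mkP6 ![1,4,2,0,3,5] ![3,0,2,4,1,5] (by decide) (by decide)
def q2146 : Equiv.Perm (Fin 6) := mkP6 ![4,1,0,2,5,3] ![2,1,3,5,0,4] (by decide) (by decide)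
def q2154 : Equiv.Perm (Fin 6) := mkP6 ![0,5,3,1,2,4] ![0,3,4,2,5,1] (by decide) (by decide)
def q2170 : Equiv.Perm (Fin 6) := mkP6 ![5,0,1,3,4,2] ![1,2,5,3,4,0] (by decide) (by decide)
def q2226 : Equiv.Perm (Fin 6) := mkP6 ![2,3,5,4,0,1] ![4,5,0,1,3,2] (by decide) (by decide)
def q2230 : Equiv.Perm (Fin 6) := mkP6 ![3,2,4,5,1,0] ![5,4,1,0,2,3] (by decide) (by decide)
def q2382 : Equiv.Perm (Fin 6) := mkP6 ![0,3,5,1,4,2] ![0,3,5,1,4,2] (by decide) (by decide)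
def q2386 : Equiv.Perm (Fin 6) := mkP6 ![3,0,1,5,2,4] ![1,2,4,0,5,3] (by decide) (by decide)
def q2402 : Equiv.Perm (Fin 6) := mkP6 ![1,2,4,0,5,3] ![3,0,1,5,2,4] (by decide) (by decide)
def q2410 : Equiv.Perm (Fin 6) := mkP6 ![2,1,0,4,3,5] ![2,1,0,4,3,5] (by decide) (by decide)
def q2426 : Equiv.Perm (Fin 6) := mkP6 ![5,4,2,3,1,0] ![5,4,2,3,1,0] (by decide) (by decide)
def q2430 : Equiv.Perm (Fin 6) := mkP6 ![4,5,3,2,0,1] ![4,5,3,2,0,1] (by decide) (by decide)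
def q2538 : Equiv.Perm (Fin 6) := mkP6 ![0,2,1,3,5,4] ![0,2,1,3,5,4] (by decide) (by decide)
def q2542 : Equiv.Perm (Fin 6) := mkP6 ![2,0,3,1,4,5] ![1,3,0,2,4,5] (by decide) (by decide)
def q2558 : Equiv.Perm (Fin 6) := mkP6 ![3,4,5,0,1,2] ![3,4,5,0,1,2] (by decide) (by decide)
def q2566 : Equiv.Perm (Fin 6) := mkP6 ![4,3,0,5,2,1] ![2,5,4,1,0,3] (by decide) (by decide)
def q2582 : Equiv.Perm (Fin 6) := mkP6 ![1,5,4,2,3,0] ![5,0,3,4,2,1] (by decide) (by decide)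
def q2586 : Equiv.Perm (Fin 6) := mkP6 ![5,1,2,4,0,3] ![4,1,2,5,3,0] (by decide) (by decide)
def q2638 : Equiv.Perm (Fin 6) := mkP6 ![1,3,0,2,4,5] ![2,0,3,1,4,5] (by decide) (by decide)
def q2642 : Equiv.Perm (Fin 6) := mkP6 ![3,1,2,0,5,4] ![3,1,2,0,5,4] (by decide) (by decide)
def q2678 : Equiv.Perm (Fin 6) := mkP6 ![2,5,4,1,0,3] ![4,3,0,5,2,1] (by decide) (by decide)
def q2690 : Equiv.Perm (Fin 6) := mkP6 ![5,2,1,4,3,0] ![5,2,1,4,3,0] (by decide) (by decide)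
def q2702 : Equiv.Perm (Fin 6) := mkP6 ![0,4,5,3,2,1] ![0,5,4,3,1,2] (by decide) (by decide)
def q2710 : Equiv.Perm (Fin 6) := mkP6 ![4,0,3,5,1,2] ![1,4,5,2,0,3] (by decide) (by decide)
def q2758 : Equiv.Perm (Fin 6) := mkP6 ![5,0,3,4,2,1] ![1,5,4,2,3,0] (by decide) (by decide)
def q2766 : Equiv.Perm (Fin 6) := mkP6 ![0,5,4,3,1,2] ![0,4,5,3,2,1] (by decide) (by decide)
def q2778 : Equiv.Perm (Fin 6) := mkP6 ![4,1,2,5,3,0] ![5,1,2,4,0,3] (by decide) (by decide)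
def q2790 : Equiv.Perm (Fin 6) := mkP6 ![1,4,5,2,0,3] ![4,0,3,5,1,2] (by decide) (by decide)
def q2826 : Equiv.Perm (Fin 6) := mkP6 ![3,2,1,0,4,5] ![3,2,1,0,4,5] (by decide) (by decide)
def q2830 : Equiv.Perm (Fin 6) := mkP6 ![2,3,0,1,5,4] ![2,3,0,1,5,4] (by decide) (by decide)
def q2882 : Equiv.Perm (Fin 6) := mkP6 ![4,2,1,5,0,3] ![4,2,1,5,0,3] (by decide) (by decide)
def q2886 : Equiv.Perm (Fin 6) := mkP6 ![2,4,5,1,3,0] ![5,3,0,4,1,2] (by decide) (by decide)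
def q2902 : Equiv.Perm (Fin 6) := mkP6 ![5,3,0,4,1,2] ![2,4,5,1,3,0] (by decide) (by decide)
def q2910 : Equiv.Perm (Fin 6) := mkP6 ![3,5,4,0,2,1] ![3,5,4,0,2,1] (by decide) (by decide)
def q2926 : Equiv.Perm (Fin 6) := mkP6 ![1,0,3,2,5,4] ![1,0,3,2,5,4] (by decide) (by decide)
def q2930 : Equiv.Perm (Fin 6) := mkP6 ![0,1,2,3,4,5] ![0,1,2,3,4,5] (by decide) (by decide)

def fTab : List (ℕ × Equiv.Perm (Fin 6)) := [
  (194, q194),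
  (198, q198),
  (214, q214),
  (222, q222),
  (238, q238),
  (242, q242),
  (294, q294),
  (298, q298),
  (334, q334),
  (346, q346),
  (358, q358),
  (366, q366),
  (414, q414),
  (422, q422),
  (434, q434),
  (446, q446),
  (482, q482),
  (486, q486),
  (538, q538),
  (542, q542),
  (558, q558),
  (566, q566),
  (582, q582),
  (586, q586),
  (694, q694),
  (698, q698),
  (714, q714),
  (722, q722),
  (738, q738),
  (742, q742),
  (894, q894),
  (898, q898),
  (954, q954),
  (970, q970),
  (978, q978),
  (990, q990),
  (1014, q1014),
  (1022, q1022),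
  (1054, q1054),
  (1070, q1070),
  (1102, q1102),
  (1110, q1110),
  (1138, q1138),
  (1142, q1142),
  (1178, q1178),
  (1190, q1190),
  (1202, q1202),
  (1210, q1210),
  (1294, q1294),
  (1298, q1298),
  (1334, q1334),
  (1346, q1346),
  (1358, q1358),
  (1366, q1366),
  (1394, q1394),
  (1398, q1398),
  (1454, q1454),
  (1470, q1470),
  (1478, q1478),
  (1490, q1490),
  (1634, q1634),
  (1646, q1646),
  (1654, q1654),
  (1670, q1670),
  (1726, q1726),
  (1730, q1730),
  (1758, q1758),
  (1766, q1766),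
  (1778, q1778),
  (1790, q1790),
  (1826, q1826),
  (1830, q1830),
  (1914, q1914),
  (1922, q1922),
  (1934, q1934),
  (1946, q1946),
  (1982, q1982),
  (1986, q1986),
  (2014, q2014),
  (2022, q2022),
  (2054, q2054),
  (2070, q2070),
  (2102, q2102),
  (2110, q2110),
  (2134, q2134),
  (2146, q2146),
  (2154, q2154),
  (2170, q2170),
  (2226, q2226),
  (2230, q2230),
  (2382, q2382),
  (2386, q2386),
  (2402, q2402),
  (2410, q2410),
  (2426, q2426),
  (2430, q2430),
  (2538, q2538),
  (2542, q2542),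
  (2558, q2558),
  (2566, q2566),
  (2582, q2582),
  (2586, q2586),
  (2638, q2638),
  (2642, q2642),
  (2678, q2678),
  (2690, q2690),
  (2702, q2702),
  (2710, q2710),
  (2758, q2758),
  (2766, q2766),
  (2778, q2778),
  (2790, q2790),
  (2826, q2826),
  (2830, q2830),
  (2882, q2882),
  (2886, q2886),
  (2902, q2902),
  (2910, q2910),
  (2926, q2926),
  (2930, q2930)
]

def enc (σ : Equiv.Perm (Fin 5)) : ℕ :=
  (σ 0).val + 5 * (σ 1).val + 25 * (σ 2).val + 125 * (σ 3).val + 625 * (σ 4).val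

def f0 (σ : Equiv.Perm (Fin 5)) : Equiv.Perm (Fin 6) := ((fTab.lookup (enc σ)).getD 1)

set_option maxRecDepth 1000000 in
lemma f0_one : f0 1 = 1 := by decide

set_option maxRecDepth 1000000 in
set_option maxHeartbeats 1000000 in
lemma f0_mul_c : ∀ τ : Perm (Fin 5), f0 (finRotate 5 * τ) = f0 (finRotate 5) * f0 τ := by
  decide

set_option maxRecDepth 1000000 in
set_option maxHeartbeats 1000000 in
lemma f0_mul_s : ∀ τ : Perm (Fin 5),
    f0 (Equiv.swap 0 (finRotate 5 0) * τ) = f0 (Equiv.swap 0 (finRotate 5 0)) * f0 τ := by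
  decide

lemma f0_mul : ∀ σ τ : Perm (Fin 5), f0 (σ * τ) = f0 σ * f0 τ := by
  intro σ
  have hσ : σ ∈ closure {finRotate 5, Equiv.swap 0 (finRotate 5 0)} := by
    rw [closure_cycle_adjacent_swap isCycle_finRotate support_finRotate 0]
    trivial
  induction hσ using closure_induction with
  | mem x hx =>
      rcases hx with rfl | rfl
      · exact f0_mul_c
      · exact f0_mul_s
  | one => intro τ; rw [one_mul, f0_one, one_mul]
  | mul x y hx hy px py =>
      intro τ
      rw [px y, mul_assoc, px (y * τ), py τ, mul_assoc]
  | inv x hx px =>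
      have hxi : (f0 x)⁻¹ = f0 x⁻¹ := by
        apply inv_eq_of_mul_eq_one_right
        rw [← px x⁻¹, mul_inv_cancel, f0_one]
      intro τ
      have h2 := px (x⁻¹ * τ)
      rw [mul_inv_cancel_left] at h2
      rw [h2, ← mul_assoc, ← hxi, inv_mul_cancel, one_mul]

def fh : Perm (Fin 5) →* Perm (Fin 6) where
  toFun := f0
  map_one' := f0_one
  map_mul' := f0_mul

set_option maxRecDepth 1000000 in
set_option maxHeartbeats 1000000 in
lemma fh_inj : Function.Injective fh := by
  rw [injective_iff_map_eq_one]
  intro a ha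
  have ha' : f0 a = 1 := ha
  revert ha'
  revert a
  decide

/-! ### The generators -/

def mkP5 (v w : Fin 5 → Fin 5) (h1 : ∀ i, w (v i) = i) (h2 : ∀ i, v (w i) = i) :
    Equiv.Perm (Fin 5) := ⟨v, w, h1, h2⟩

def s1 : Perm (Fin 5) := mkP5 ![0,4,2,1,3] ![0,3,2,4,1] (by decide) (by decide)
def s2 : Perm (Fin 5) := mkP5 ![2,1,4,3,0] ![4,1,0,3,2] (by decide) (by decide)

def p61 : Perm (Fin 6) := mkP6 ![1,3,5,0,2,4] ![3,0,4,1,5,2] (by decide) (by decide)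
def p62 : Perm (Fin 6) := mkP6 ![2,4,3,0,5,1] ![3,5,0,2,1,4] (by decide) (by decide)

set_option maxRecDepth 1000000 in
lemma f0_s1 : f0 s1 = p61 := by decide

set_option maxRecDepth 1000000 in
lemma f0_s2 : f0 s2 = p62 := by decide

lemma phi_p61 : phi p61 = g1 := by
  refine LinearEquiv.toLinearMap_injective (LinearMap.ext fun x => funext fun i => ?_)
  fin_cases i <;> rfl

lemma phi_p62 : phi p62 = g2 := by
  refine LinearEquiv.toLinearMap_injective (LinearMap.ext fun x => funext fun i => ?_)
  fin_cases i <;> rfl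

def psi : Perm (Fin 5) →* (V5 ≃ₗ[ℂ] V5) := phi.comp fh

lemma psi_inj : Function.Injective psi := by
  have : ⇑psi = ⇑phi ∘ ⇑fh := rfl
  rw [this]
  exact phi_inj.comp fh_inj

lemma psi_s1 : psi s1 = g1 := by
  show phi (f0 s1) = g1
  rw [f0_s1, phi_p61]

lemma psi_s2 : psi s2 = g2 := by
  show phi (f0 s2) = g2
  rw [f0_s2, phi_p62]

/-! ### `⟨s1, s2⟩ = A₅` -/

lemma card_A5 : Nat.card (alternatingGroup (Fin 5)) = 60 := by
  have h := two_mul_card_alternatingGroup (α := Fin 5)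
  have hp : Fintype.card (Perm (Fin 5)) = 120 := by
    rw [Fintype.card_perm, Fintype.card_fin]
    decide
  rw [Nat.card_eq_fintype_card]
  omega

lemma s1_mem_alt : s1 ∈ alternatingGroup (Fin 5) := by
  rw [mem_alternatingGroup,
    show s1 = Equiv.swap 1 4 * Equiv.swap 4 3 by decide, map_mul, sign_swap (by decide),
    sign_swap (by decide)]
  norm_num

lemma s2_mem_alt : s2 ∈ alternatingGroup (Fin 5) := by
  rw [mem_alternatingGroup,
    show s2 = Equiv.swap 0 2 * Equiv.swap 2 4 by decide, map_mul, sign_swap (by decide),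
    sign_swap (by decide)]
  norm_num

lemma hKle : closure {s1, s2} ≤ alternatingGroup (Fin 5) := by
  rw [closure_le]
  rintro x (rfl | rfl)
  · exact s1_mem_alt
  · exact s2_mem_alt

lemma hs1K : s1 ∈ closure {s1, s2} := subset_closure (by simp)
lemma hs2K : s2 ∈ closure {s1, s2} := subset_closure (by simp)

lemma order2 : orderOf (s1 * s1 * s2 * s1 * s2) = 2 := by
  have : Fact (Nat.Prime 2) := ⟨by norm_num⟩
  exact orderOf_eq_prime (by decide) (by decide)

lemma order3 : orderOf s1 = 3 := by
  have : Fact (Nat.Prime 3) := ⟨by norm_num⟩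
  exact orderOf_eq_prime (by decide) (by decide)

lemma order5 : orderOf (s1 * s2) = 5 := by
  have : Fact (Nat.Prime 5) := ⟨by norm_num⟩
  exact orderOf_eq_prime (by decide) (by decide)

lemma hK_eq : closure {s1, s2} = alternatingGroup (Fin 5) := by
  set K := closure {s1, s2} with hKdef
  have hdvd60 : Nat.card K ∣ 60 := card_A5 ▸ card_dvd_of_le hKle
  have h2 : (2 : ℕ) ∣ Nat.card K := by
    have := Subgroup.orderOf_dvd_natCard K
      (mul_mem (mul_mem (mul_mem (mul_mem hs1K hs1K) hs2K) hs1K) hs2K)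
    rwa [order2] at this
  have h3 : (3 : ℕ) ∣ Nat.card K := by
    have := Subgroup.orderOf_dvd_natCard K hs1K
    rwa [order3] at this
  have h5 : (5 : ℕ) ∣ Nat.card K := by
    have := Subgroup.orderOf_dvd_natCard K (mul_mem hs1K hs2K)
    rwa [order5] at this
  have h6 : (6 : ℕ) ∣ Nat.card K :=
    (Nat.coprime_iff_gcd_eq_one.mpr (by norm_num)).mul_dvd_of_dvd_of_dvd h2 h3
  have h30 : (30 : ℕ) ∣ Nat.card K :=
    (Nat.coprime_iff_gcd_eq_one.mpr (by norm_num)).mul_dvd_of_dvd_of_dvd h6 h5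
  obtain ⟨k, hk⟩ := h30
  obtain ⟨m, hm⟩ := hdvd60
  have hkm : k * m = 2 := by
    have h : 30 * (k * m) = 30 * 2 := by rw [← mul_assoc, ← hk, ← hm]
    exact Nat.eq_of_mul_eq_mul_left (by norm_num) h
  have hk2 : k = 1 ∨ k = 2 := by
    have hkle : k ≤ 2 := Nat.le_of_dvd (by norm_num) ⟨m, hkm.symm⟩
    interval_cases k <;> omega
  rcases hk2 with rfl | rfl
  · -- |K| = 30 : derive A₅ ≤ K using index-two squares
    have hcard : Nat.card K = 30 := by omega
    set K' := K.subgroupOf (alternatingGroup (Fin 5)) with hK'def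
    have hcardK' : Nat.card K' = 30 := by
      rw [← hcard]
      exact Nat.card_congr (subgroupOfEquivOfLe hKle).toEquiv
    have hidx : K'.index = 2 := by
      have hmi := K'.card_mul_index
      rw [hcardK', card_A5] at hmi
      omega
    have hA5le : alternatingGroup (Fin 5) ≤ K := by
      rw [← closure_three_cycles_eq_alternating, closure_le]
      intro σ hσ
      have hσ' : σ.IsThreeCycle := hσ
      have hA : σ ∈ alternatingGroup (Fin 5) := hσ'.mem_alternatingGroup
      have hsq := Subgroup.sq_mem_of_index_two hidx ((⟨σ, hA⟩ : alternatingGroup (Fin 5)) ^ 2)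
      have hpow : ((⟨σ, hA⟩ : alternatingGroup (Fin 5)) ^ 2) ^ 2 = ⟨σ, hA⟩ := by
        have h3 : σ ^ 3 = 1 := by
          rw [← hσ'.orderOf]
          exact pow_orderOf_eq_one σ
        apply Subtype.ext
        rw [SubmonoidClass.coe_pow, SubmonoidClass.coe_pow, ← pow_mul]
        show σ ^ 4 = σ
        rw [pow_succ, h3, one_mul]
      rw [hpow] at hsq
      exact (Subgroup.mem_subgroupOf).mp hsq
    exact le_antisymm hKle hA5le
  · -- |K| = 60
    exact Subgroup.eq_of_le_of_card_ge hKle (by rw [card_A5]; omega)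

end S9

/-- Γ = ⟨g₁, g₂⟩ is isomorphic to the alternating group 𝔄₅; in particular |Γ| = 60. -/
theorem statement9 :
    Nonempty (Gamma ≃* alternatingGroup (Fin 5)) ∧ Nat.card Gamma = 60 := by
  have hmap : Subgroup.map S9.psi (alternatingGroup (Fin 5)) = Gamma := by
    rw [← S9.hK_eq, MonoidHom.map_closure]
    show Subgroup.closure (⇑S9.psi '' {S9.s1, S9.s2}) = Subgroup.closure {g1, g2}
    rw [Set.image_insert_eq, Set.image_singleton, S9.psi_s1, S9.psi_s2]
  let e : alternatingGroup (Fin 5) ≃* Gamma :=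
    (Subgroup.equivMapOfInjective _ S9.psi S9.psi_inj).trans (MulEquiv.subgroupCongr hmap)
  exact ⟨⟨e.symm⟩, (Nat.card_congr e.toEquiv).symm.trans S9.card_A5⟩
end
end

section
/- The quadratic form q = Σ_{1≤i≤j≤5} xᵢxⱼ satisfies q∘g₁ = q and q∘g₂ = q, and every homogeneous polynomial of degree 2 in ℂ[x₁,…,x₅] that is invariant under the substitutions g₁ and g₂ is a scalar multiple of q. In particular, X₂ is the unique quadric hypersurface of ℙ⁴ invariant under Γ. -/
open Projectivization MvPolynomial

noncomputable section
set_option linter.unnecessarySeqFocus false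

/-- q = Σ_{1≤i≤j≤5} xᵢxⱼ as a polynomial. -/
def qPoly : MvPolynomial (Fin 5) ℂ := ∑ i, ∑ j, if i ≤ j then X i * X j else 0

/-- The substitution p ↦ p∘g₁ on polynomials. -/
def sub1 : MvPolynomial (Fin 5) ℂ →ₐ[ℂ] MvPolynomial (Fin 5) ℂ :=
  bind₁ ![X 3, X 0, X 4, X 1, -(X 0 + X 1 + X 2 + X 3 + X 4)]

/-- The substitution p ↦ p∘g₂ on polynomials. -/
def sub2 : MvPolynomial (Fin 5) ℂ →ₐ[ℂ] MvPolynomial (Fin 5) ℂ :=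
  bind₁ ![X 3, -(X 0 + X 1 + X 2 + X 3 + X 4), X 0, X 2, X 1]

-- ===== auxiliary lemmas =====

lemma sval (i j k : Fin 5) : (Finsupp.single i 1 + Finsupp.single j 1 : Fin 5 →₀ ℕ) k
    = (if i = k then 1 else 0) + (if j = k then 1 else 0) := by
  simp [Finsupp.single_apply]

lemma exists_pair (m : Fin 5 →₀ ℕ) (h : m 0 + m 1 + m 2 + m 3 + m 4 = 2) :
    ∃ i j : Fin 5, i ≤ j ∧ m = Finsupp.single i 1 + Finsupp.single j 1 := by
  have hs : ∑ k, m k = 2 := by rw [Fin.sum_univ_five]; exact h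
  have hex : ∃ i, m i ≠ 0 := by
    by_contra hc
    push_neg at hc
    simp [hc] at hs
  obtain ⟨i, hi⟩ := hex
  have hle : m i ≤ 2 := hs ▸ Finset.single_le_sum (f := m) (fun _ _ => Nat.zero_le _)
    (Finset.mem_univ i)
  have herase : ∑ k ∈ Finset.univ.erase i, m k + m i = 2 := by
    rw [Finset.sum_erase_add _ _ (Finset.mem_univ i)]; exact hs
  rcases (by omega : m i = 1 ∨ m i = 2) with h1 | h2
  · have hs' : ∑ k ∈ Finset.univ.erase i, m k = 1 := by omega
    have hex2 : ∃ j ∈ Finset.univ.erase i, m j ≠ 0 := by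
      by_contra hc
      push_neg at hc
      rw [Finset.sum_eq_zero hc] at hs'
      exact absurd hs'.symm one_ne_zero
    obtain ⟨j, hjmem, hj⟩ := hex2
    have hij : j ≠ i := Finset.ne_of_mem_erase hjmem
    have hjle : m j ≤ 1 := hs' ▸ Finset.single_le_sum (f := m) (fun _ _ => Nat.zero_le _) hjmem
    have hj1 : m j = 1 := by omega
    have hz : ∀ k, k ≠ i → k ≠ j → m k = 0 := by
      intro k hki hkj
      have hmem : k ∈ (Finset.univ.erase i).erase j :=
        Finset.mem_erase.2 ⟨hkj, Finset.mem_erase.2 ⟨hki, Finset.mem_univ k⟩⟩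
      have : ∑ k ∈ (Finset.univ.erase i).erase j, m k + m j = 1 := by
        rw [Finset.sum_erase_add _ _ hjmem]; exact hs'
      have hzero : ∑ k ∈ (Finset.univ.erase i).erase j, m k = 0 := by omega
      exact (Finset.sum_eq_zero_iff.1 hzero) k hmem
    have hval : ∀ k, m k = (if i = k then 1 else 0) + (if j = k then 1 else 0) := by
      intro k
      by_cases hik : i = k
      · subst hik; rw [if_pos rfl, if_neg hij]; omega
      · by_cases hjk : j = k
        · subst hjk; rw [if_neg hik, if_pos rfl]; omega
        · rw [if_neg hik, if_neg hjk]
          exact hz k (fun hc => hik hc.symm) (fun hc => hjk hc.symm)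
    rcases le_total i j with hij' | hij'
    · exact ⟨i, j, hij', Finsupp.ext fun k => by rw [sval]; exact hval k⟩
    · exact ⟨j, i, hij', Finsupp.ext fun k => by rw [sval]; exact (hval k).trans (add_comm _ _)⟩
  · have hz : ∀ k, k ≠ i → m k = 0 := by
      intro k hk
      have hzero : ∑ k ∈ Finset.univ.erase i, m k = 0 := by omega
      exact (Finset.sum_eq_zero_iff.1 hzero) k (Finset.mem_erase.2 ⟨hk, Finset.mem_univ k⟩)
    refine ⟨i, i, le_refl i, Finsupp.ext fun k => ?_⟩
    rw [sval]
    by_cases hik : i = k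
    · subst hik; simp [h2]
    · rw [if_neg hik]; simpa using hz k (fun hc => hik hc.symm)

lemma pair_inj {i j i' j' : Fin 5} (hij : i ≤ j) (h' : i' ≤ j')
    (h : Finsupp.single i (1:ℕ) + Finsupp.single j 1 = Finsupp.single i' 1 + Finsupp.single j' 1) :
    i = i' ∧ j = j' := by
  have hk : ∀ k, (if i = k then (1:ℕ) else 0) + (if j = k then 1 else 0)
      = (if i' = k then (1:ℕ) else 0) + (if j' = k then 1 else 0) := fun k => by
    rw [← sval, ← sval, h]
  by_cases hii : i = i'
  · subst hii
    have hj : Finsupp.single j (1:ℕ) = Finsupp.single j' 1 := add_left_cancel h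
    rcases (Finsupp.single_eq_single_iff _ _ _ _).1 hj with ⟨hjj, -⟩ | ⟨h10, -⟩
    · exact ⟨rfl, hjj⟩
    · exact absurd h10 one_ne_zero
  · exfalso
    have e1 := hk i
    rw [if_pos rfl, if_neg (Ne.symm hii)] at e1
    have hji : j ≠ i := by
      intro hcon; rw [if_pos hcon] at e1; split_ifs at e1 <;> omega
    have hj'i : j' = i := by
      by_contra hcon
      rw [if_neg hji, if_neg hcon] at e1
      simp at e1
    have e2 := hk i'
    rw [if_neg hii, if_pos rfl] at e2
    have hji' : j = i' := by
      by_contra hcon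
      rw [if_neg hcon] at e2
      split_ifs at e2 <;> omega
    exact hii (le_antisymm (hji' ▸ hij) (hj'i ▸ h'))

lemma CXX (a : ℂ) (i j : Fin 5) :
    C a * X i * X j = monomial (Finsupp.single i 1 + Finsupp.single j 1) a := by
  rw [C_mul_X_eq_monomial, X, monomial_mul, mul_one]

lemma deg_eq (m : Fin 5 →₀ ℕ) : m.degree = m 0 + m 1 + m 2 + m 3 + m 4 := by
  rw [Finsupp.degree_apply, Finset.sum_subset (Finset.subset_univ _)
    (fun i _ hni => Finsupp.notMem_support_iff.1 hni), Fin.sum_univ_five]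

lemma deg_pair (i j : Fin 5) : (Finsupp.single i 1 + Finsupp.single j 1).degree = 2 := by
  rw [deg_eq, sval, sval, sval, sval, sval]
  fin_cases i <;> fin_cases j <;> decide

lemma rep (p : MvPolynomial (Fin 5) ℂ) (hp : p.IsHomogeneous 2) :
    p = ∑ i, ∑ j, if i ≤ j then
      C (coeff (Finsupp.single i 1 + Finsupp.single j 1) p) * X i * X j else 0 := by
  apply MvPolynomial.ext
  intro m
  have hcoeff : ∀ (i j : Fin 5),
      coeff m (if i ≤ j then C (coeff (Finsupp.single i 1 + Finsupp.single j 1) p) * X i * X j else 0)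
      = if i ≤ j then (if Finsupp.single i 1 + Finsupp.single j 1 = m then
          coeff (Finsupp.single i 1 + Finsupp.single j 1) p else 0) else 0 := by
    intro i j
    by_cases hle : i ≤ j
    · rw [if_pos hle, if_pos hle, CXX, coeff_monomial]
    · rw [if_neg hle, if_neg hle, coeff_zero]
  rw [coeff_sum]
  simp_rw [coeff_sum, hcoeff]
  by_cases hm : m.degree = 2
  · rw [deg_eq] at hm
    obtain ⟨i, j, hij, rfl⟩ := exists_pair m hm
    rw [← Finset.sum_product']
    rw [Finset.sum_eq_single (i, j)]
    · rw [if_pos hij, if_pos rfl]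
    · rintro ⟨i', j'⟩ - hne
      by_cases h1 : i' ≤ j'
      · rw [if_pos h1]
        by_cases h2 : Finsupp.single i' 1 + Finsupp.single j' 1 = Finsupp.single i 1 + Finsupp.single j 1
        · obtain ⟨rfl, rfl⟩ := pair_inj h1 hij h2
          exact absurd rfl hne
        · rw [if_neg h2]
      · rw [if_neg h1]
    · intro hmem
      exact absurd (Finset.mem_univ _) hmem
  · rw [hp.coeff_eq_zero hm]
    symm
    apply Finset.sum_eq_zero
    intro i _
    apply Finset.sum_eq_zero
    intro j _
    split_ifs with hle heq
    · exact absurd (heq ▸ deg_pair i j) hm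
    · rfl
    · rfl

lemma eval_bind (g : Fin 5 → MvPolynomial (Fin 5) ℂ) (φ : MvPolynomial (Fin 5) ℂ) (v : Fin 5 → ℂ) :
    eval v (bind₁ g φ) = eval (fun i => eval v (g i)) φ :=
  eval₂Hom_bind₁ _ _ _ _

set_option maxHeartbeats 2000000 in
lemma key (p : MvPolynomial (Fin 5) ℂ) (hp : p.IsHomogeneous 2)
    (h1 : sub1 p = p) (h2 : sub2 p = p) : ∃ c : ℂ, p = C c * qPoly := by
  have hrep := rep p hp
  have hev : ∀ v : Fin 5 → ℂ, eval v p = ∑ i, ∑ j, if i ≤ j then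
      coeff (Finsupp.single i 1 + Finsupp.single j 1) p * v i * v j else 0 := by
    intro v
    conv_lhs => rw [hrep]
    rw [map_sum]
    refine Finset.sum_congr rfl fun i _ => ?_
    rw [map_sum]
    refine Finset.sum_congr rfl fun j _ => ?_
    split_ifs
    · rw [eval_mul, eval_mul, eval_C, eval_X, eval_X]
    · exact map_zero _
  have e1 : ∀ v : Fin 5 → ℂ,
      eval (fun i => eval v (![X 3, X 0, X 4, X 1, -(X 0 + X 1 + X 2 + X 3 + X 4)] i)) p
        = eval v p := by
    intro v
    conv_rhs => rw [← h1]
    rw [sub1, eval_bind]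
  have e2 : ∀ v : Fin 5 → ℂ,
      eval (fun i => eval v (![X 3, -(X 0 + X 1 + X 2 + X 3 + X 4), X 0, X 2, X 1] i)) p
        = eval v p := by
    intro v
    conv_rhs => rw [← h2]
    rw [sub2, eval_bind]
  have E1_0 := e1 ![1,0,0,0,0]
  rw [hev, hev] at E1_0
  simp [Fin.sum_univ_five] at E1_0
  have E1_1 := e1 ![0,1,0,0,0]
  rw [hev, hev] at E1_1
  simp [Fin.sum_univ_five] at E1_1
  have E1_2 := e1 ![0,0,1,0,0]
  rw [hev, hev] at E1_2
  simp [Fin.sum_univ_five] at E1_2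
  have E1_3 := e1 ![0,0,0,1,0]
  rw [hev, hev] at E1_3
  simp [Fin.sum_univ_five] at E1_3
  have E1_4 := e1 ![0,0,0,0,1]
  rw [hev, hev] at E1_4
  simp [Fin.sum_univ_five] at E1_4
  have E1_5 := e1 ![1,1,0,0,0]
  rw [hev, hev] at E1_5
  simp [Fin.sum_univ_five] at E1_5
  have E1_6 := e1 ![1,0,1,0,0]
  rw [hev, hev] at E1_6
  simp [Fin.sum_univ_five] at E1_6
  have E1_7 := e1 ![1,0,0,1,0]
  rw [hev, hev] at E1_7
  simp [Fin.sum_univ_five] at E1_7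
  have E1_8 := e1 ![1,0,0,0,1]
  rw [hev, hev] at E1_8
  simp [Fin.sum_univ_five] at E1_8
  have E1_11 := e1 ![0,1,0,0,1]
  rw [hev, hev] at E1_11
  simp [Fin.sum_univ_five] at E1_11
  have E2_0 := e2 ![1,0,0,0,0]
  rw [hev, hev] at E2_0
  simp [Fin.sum_univ_five] at E2_0
  have E2_1 := e2 ![0,1,0,0,0]
  rw [hev, hev] at E2_1
  simp [Fin.sum_univ_five] at E2_1
  have E2_2 := e2 ![0,0,1,0,0]
  rw [hev, hev] at E2_2
  simp [Fin.sum_univ_five] at E2_2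
  have E2_3 := e2 ![0,0,0,1,0]
  rw [hev, hev] at E2_3
  simp [Fin.sum_univ_five] at E2_3
  have h00 : coeff (Finsupp.single (0:Fin 5) 1 + Finsupp.single (0:Fin 5) 1) p
      = coeff (Finsupp.single (0:Fin 5) 1 + Finsupp.single (1:Fin 5) 1) p := by
    linear_combination (-3) * E1_0 + (-1) * E1_3 + (-2) * E1_4 + (1) * E1_8 + (1) * E2_0 + (1) * E2_1 + (1) * E2_3
  have h02 : coeff (Finsupp.single (0:Fin 5) 1 + Finsupp.single (2:Fin 5) 1) p
      = coeff (Finsupp.single (0:Fin 5) 1 + Finsupp.single (1:Fin 5) 1) p := by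
    linear_combination (-2) * E1_0 + (2) * E1_1 + (2) * E1_2 + (-2) * E1_3 + (-4) * E1_4 + (-1) * E1_5 + (-1) * E1_6 + (2) * E1_8 + (2) * E2_0 + (2) * E2_1 + (-1) * E2_2 + (2) * E2_3
  have h03 : coeff (Finsupp.single (0:Fin 5) 1 + Finsupp.single (3:Fin 5) 1) p
      = coeff (Finsupp.single (0:Fin 5) 1 + Finsupp.single (1:Fin 5) 1) p := by
    linear_combination (-1) * E1_0 + (1) * E1_3 + (-2) * E1_4 + (-1) * E1_7 + (1) * E1_8 + (1) * E2_0 + (1) * E2_1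
  have h04 : coeff (Finsupp.single (0:Fin 5) 1 + Finsupp.single (4:Fin 5) 1) p
      = coeff (Finsupp.single (0:Fin 5) 1 + Finsupp.single (1:Fin 5) 1) p := by
    linear_combination (-1) * E1_0 + (2) * E1_1 + (1) * E1_2 + (-2) * E1_3 + (-2) * E1_4 + (-1) * E1_5 + (1) * E1_8 + (1) * E2_0 + (1) * E2_1 + (-1) * E2_2 + (2) * E2_3
  have h11 : coeff (Finsupp.single (1:Fin 5) 1 + Finsupp.single (1:Fin 5) 1) p
      = coeff (Finsupp.single (0:Fin 5) 1 + Finsupp.single (1:Fin 5) 1) p := by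
    linear_combination (-2) * E1_0 + (-1) * E1_3 + (-2) * E1_4 + (1) * E1_8 + (1) * E2_0 + (1) * E2_3
  have h12 : coeff (Finsupp.single (1:Fin 5) 1 + Finsupp.single (2:Fin 5) 1) p
      = coeff (Finsupp.single (0:Fin 5) 1 + Finsupp.single (1:Fin 5) 1) p := by
    linear_combination (-2) * E1_0 + (2) * E1_1 + (-2) * E1_3 + (-4) * E1_4 + (-1) * E1_5 + (2) * E1_8 + (1) * E2_0 + (-1) * E2_2 + (2) * E2_3
  have h13 : coeff (Finsupp.single (1:Fin 5) 1 + Finsupp.single (3:Fin 5) 1) p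
      = coeff (Finsupp.single (0:Fin 5) 1 + Finsupp.single (1:Fin 5) 1) p := by
    linear_combination (-4) * E1_0 + (-2) * E1_1 + (-1) * E1_3 + (-2) * E1_4 + (1) * E1_5 + (1) * E1_8 + (1) * E2_0
  have h14 : coeff (Finsupp.single (1:Fin 5) 1 + Finsupp.single (4:Fin 5) 1) p
      = coeff (Finsupp.single (0:Fin 5) 1 + Finsupp.single (1:Fin 5) 1) p := by
    linear_combination (-3) * E1_0 + (2) * E1_1 + (1) * E1_2 + (-2) * E1_3 + (-4) * E1_4 + (-1) * E1_5 + (2) * E1_8 + (2) * E2_0 + (-1) * E2_2 + (2) * E2_3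
  have h22 : coeff (Finsupp.single (2:Fin 5) 1 + Finsupp.single (2:Fin 5) 1) p
      = coeff (Finsupp.single (0:Fin 5) 1 + Finsupp.single (1:Fin 5) 1) p := by
    linear_combination (-3) * E1_0 + (2) * E1_1 + (-2) * E1_3 + (-4) * E1_4 + (-1) * E1_5 + (2) * E1_8 + (2) * E2_0 + (1) * E2_1 + (-1) * E2_2 + (2) * E2_3
  have h23 : coeff (Finsupp.single (2:Fin 5) 1 + Finsupp.single (3:Fin 5) 1) p
      = coeff (Finsupp.single (0:Fin 5) 1 + Finsupp.single (1:Fin 5) 1) p := by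
    linear_combination (-6) * E1_0 + (-3) * E1_3 + (-8) * E1_4 + (-1) * E1_5 + (3) * E1_8 + (1) * E1_11 + (3) * E2_0 + (1) * E2_1 + (-1) * E2_2 + (2) * E2_3
  have h24 : coeff (Finsupp.single (2:Fin 5) 1 + Finsupp.single (4:Fin 5) 1) p
      = coeff (Finsupp.single (0:Fin 5) 1 + Finsupp.single (1:Fin 5) 1) p := by
    linear_combination (-3) * E1_0 + (2) * E1_1 + (-2) * E1_3 + (-5) * E1_4 + (-1) * E1_5 + (2) * E1_8 + (2) * E2_0 + (1) * E2_1 + (-1) * E2_2 + (2) * E2_3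
  have h33 : coeff (Finsupp.single (3:Fin 5) 1 + Finsupp.single (3:Fin 5) 1) p
      = coeff (Finsupp.single (0:Fin 5) 1 + Finsupp.single (1:Fin 5) 1) p := by
    linear_combination (-5) * E1_0 + (-2) * E1_3 + (-4) * E1_4 + (2) * E1_8 + (2) * E2_0 + (1) * E2_1 + (1) * E2_3
  have h34 : coeff (Finsupp.single (3:Fin 5) 1 + Finsupp.single (4:Fin 5) 1) p
      = coeff (Finsupp.single (0:Fin 5) 1 + Finsupp.single (1:Fin 5) 1) p := by
    linear_combination (-6) * E1_0 + (1) * E1_1 + (1) * E1_2 + (-3) * E1_3 + (-6) * E1_4 + (-1) * E1_5 + (3) * E1_8 + (3) * E2_0 + (2) * E2_1 + (-1) * E2_2 + (2) * E2_3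
  have h44 : coeff (Finsupp.single (4:Fin 5) 1 + Finsupp.single (4:Fin 5) 1) p
      = coeff (Finsupp.single (0:Fin 5) 1 + Finsupp.single (1:Fin 5) 1) p := by
    linear_combination (-3) * E1_0 + (2) * E1_1 + (1) * E1_2 + (-2) * E1_3 + (-4) * E1_4 + (-1) * E1_5 + (2) * E1_8 + (2) * E2_0 + (1) * E2_1 + (-1) * E2_2 + (2) * E2_3
  refine ⟨coeff (Finsupp.single (0:Fin 5) 1 + Finsupp.single (1:Fin 5) 1) p, ?_⟩
  conv_lhs => rw [hrep]
  rw [qPoly]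
  simp only [Fin.sum_univ_five]
  simp (config := { decide := true }) only [if_true, if_false]
  rw [h00, h02, h03, h04, h11, h12, h13, h14, h22, h23, h24, h33, h34, h44]
  ring

lemma eval_qPoly (v : V5) : eval v qPoly = qQ v := by
  rw [qPoly, qQ, map_sum]
  refine Finset.sum_congr rfl fun i _ => ?_
  rw [map_sum]
  refine Finset.sum_congr rfl fun j _ => ?_
  split_ifs
  · rw [eval_mul, eval_X, eval_X]
  · exact map_zero _

set_option maxHeartbeats 1000000 in
/-- q is Γ-invariant, every Γ-invariant quadratic form is a scalar multiple of q,
and (in particular) X₂ is the unique Γ-invariant quadric hypersurface of ℙ⁴. -/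
theorem statement10 :
    sub1 qPoly = qPoly ∧ sub2 qPoly = qPoly ∧
    (∀ p : MvPolynomial (Fin 5) ℂ, p.IsHomogeneous 2 → sub1 p = p → sub2 p = p →
      ∃ c : ℂ, p = C c * qPoly) ∧
    (∀ p : MvPolynomial (Fin 5) ℂ, p.IsHomogeneous 2 → p ≠ 0 → sub1 p = p → sub2 p = p →
      { x : P4 | ∃ (v : V5) (hv : v ≠ 0), x = Projectivization.mk ℂ v hv ∧ eval v p = 0 }
        = X2) := by
  refine ⟨?_, ?_, fun p hp h1 h2 => key p hp h1 h2, ?_⟩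
  · rw [qPoly, sub1]
    simp only [Fin.sum_univ_five]
    simp (config := { decide := true }) only [map_add, map_mul, map_pow, map_neg,
      bind₁_X_right, if_true, if_false]
    norm_num [Matrix.cons_val_zero, Matrix.cons_val_one, Matrix.head_cons,
      Matrix.cons_val_two, Matrix.tail_cons, Matrix.cons_val_three, Matrix.cons_val_four]
    ring
  · rw [qPoly, sub2]
    simp only [Fin.sum_univ_five]
    simp (config := { decide := true }) only [map_add, map_mul, map_pow, map_neg,
      bind₁_X_right, if_true, if_false]
    norm_num [Matrix.cons_val_zero, Matrix.cons_val_one, Matrix.head_cons,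
      Matrix.cons_val_two, Matrix.tail_cons, Matrix.cons_val_three, Matrix.cons_val_four]
    ring
  · intro p hp hne h1 h2
    obtain ⟨c, hc⟩ := key p hp h1 h2
    have hc0 : c ≠ 0 := by
      rintro rfl
      rw [map_zero, zero_mul] at hc
      exact hne hc
    have hq : ∀ v : V5, eval v p = c * qQ v := by
      intro v
      rw [hc, eval_mul, eval_C, eval_qPoly]
    ext x
    constructor
    · rintro ⟨v, hv, rfl, hz⟩
      refine ⟨v, hv, rfl, ?_⟩
      rw [hq] at hz
      exact (mul_eq_zero.1 hz).resolve_left hc0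
    · rintro ⟨v, hv, rfl, hz⟩
      exact ⟨v, hv, rfl, by rw [hq, hz, mul_zero]⟩
end
end

section
/- There is no nonzero vector v ∈ ℂ⁵ and scalars c₁, c₂ ∈ ℂ such that g₁(v) = c₁v and g₂(v) = c₂v. In particular, the action of Γ on ℙ⁴ has no fixed points, and hence the Γ-action on X₂ has no fixed points. -/
open Projectivization MvPolynomial

noncomputable section
set_option linter.unnecessarySeqFocus false

/-- g₁ and g₂ have no common eigenvector; hence the Γ-action on ℙ⁴, and in
particular on X₂, has no fixed points. -/
theorem statement13 :
    (¬ ∃ (v : V5) (c1 c2 : ℂ), v ≠ 0 ∧ g1 v = c1 • v ∧ g2 v = c2 • v) ∧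
    (¬ ∃ p : P4, ∀ γ ∈ Gamma, projMap γ p = p) ∧
    (¬ ∃ p ∈ X2, ∀ γ ∈ Gamma, projMap γ p = p) := by
  have key : ¬ ∃ (v : V5) (c1 c2 : ℂ), v ≠ 0 ∧ g1 v = c1 • v ∧ g2 v = c2 • v := by
    rintro ⟨v, c1, c2, hv, h1, h2⟩
    have e0 := congrFun h1 0
    have e1 := congrFun h1 1
    have e2 := congrFun h1 2
    have e3 := congrFun h1 3
    have e4 := congrFun h1 4
    have f0 := congrFun h2 0
    have f1 := congrFun h2 1
    have f2 := congrFun h2 2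
    have f3 := congrFun h2 3
    have f4 := congrFun h2 4
    simp [g1] at e0 e1 e2 e3 e4
    simp [g2] at f0 f1 f2 f3 f4
    have vz : v 0 = 0 → v 1 = 0 → v 2 = 0 → v 3 = 0 → v 4 = 0 → False := by
      intro a b c d e
      exact hv (funext fun i => by fin_cases i <;> simp only [Pi.zero_apply] <;> assumption)
    by_cases hc1 : c1 = 0
    · subst hc1
      have h3 : v 3 = 0 := by linear_combination e0
      have h0 : v 0 = 0 := by linear_combination e1
      have h4 : v 4 = 0 := by linear_combination e2
      have h1' : v 1 = 0 := by linear_combination e3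
      have h2' : v 2 = 0 := by linear_combination -e4 - h0 - h1' - h3 - h4
      exact vz h0 h1' h2' h3 h4
    by_cases hc2 : c2 = 0
    · subst hc2
      have h3 : v 3 = 0 := by linear_combination f0
      have h0 : v 0 = 0 := by linear_combination f2
      have h2' : v 2 = 0 := by linear_combination f3
      have h1' : v 1 = 0 := by linear_combination f4
      have h4 : v 4 = 0 := by linear_combination -f1 - h0 - h1' - h2' - h3
      exact vz h0 h1' h2' h3 h4
    by_cases h0 : v 0 = 0
    · have h3 : v 3 = 0 := by linear_combination f0 + c2 * h0
      have h1' : v 1 = 0 := by linear_combination e3 + c1 * h3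
      have h2' : v 2 = 0 := by
        have hz : c2 * v 2 = 0 := by linear_combination -f2 + h0
        exact (mul_eq_zero.mp hz).resolve_left hc2
      have h4 : v 4 = 0 := by linear_combination e2 + c1 * h2'
      exact vz h0 h1' h2' h3 h4
    · have hc13 : c1 ^ 3 = 1 := by
        have hz : (c1 ^ 3 - 1) * v 0 = 0 := by linear_combination -e1 - c1 * e3 - c1 ^ 2 * e0
        have := (mul_eq_zero.mp hz).resolve_right h0
        linear_combination this
      have hc23 : c2 ^ 3 = 1 := by
        have hz : (c2 ^ 3 - 1) * v 0 = 0 := by linear_combination -f2 - c2 * f3 - c2 ^ 2 * f0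
        have := (mul_eq_zero.mp hz).resolve_right h0
        linear_combination this
      have hc12 : c1 = c2 := by
        have hz : (c1 - c2) * v 0 = 0 := by linear_combination f0 - e0
        have := (mul_eq_zero.mp hz).resolve_right h0
        linear_combination this
      have hv2 : v 2 = c2 ^ 2 * v 0 := by linear_combination -c2 ^ 2 * f2 - v 2 * hc23
      have hv4 : v 4 = v 0 := by
        linear_combination e2 + c1 * hv2 + c2 ^ 2 * v 0 * hc12 + v 0 * hc23
      have hv1a : v 1 = c1 ^ 2 * v 0 := by linear_combination -c1 ^ 2 * e1 - v 1 * hc13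
      have hv1b : v 1 = c1 * v 0 := by linear_combination f4 + c2 * hv4 - v 0 * hc12
      have hz : c1 * ((c1 - 1) * v 0) = 0 := by linear_combination hv1b - hv1a
      have hc1one : c1 = 1 := by
        have h' := (mul_eq_zero.mp hz).resolve_left hc1
        have h'' := (mul_eq_zero.mp h').resolve_right h0
        linear_combination h''
      have hc2one : c2 = 1 := hc12.symm.trans hc1one
      have hA3 : v 3 = v 0 := by linear_combination e0 + v 0 * hc1one
      have hA1 : v 1 = v 0 := by linear_combination hv1b + v 0 * hc1one
      have hA2 : v 2 = v 0 := by linear_combination hv2 + (c2 + 1) * v 0 * hc2one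
      have final : (6 : ℂ) * v 0 = 0 := by
        linear_combination -e4 - hA1 - hA2 - hA3 - 2 * hv4 - v 4 * hc1one
      exact h0 (by linear_combination final / 6)
  have key2 : ¬ ∃ p : P4, ∀ γ ∈ Gamma, projMap γ p = p := by
    rintro ⟨p, hp⟩
    have hg1 : g1 ∈ Gamma := Subgroup.subset_closure (by simp)
    have hg2 : g2 ∈ Gamma := Subgroup.subset_closure (by simp)
    have h1 := hp g1 hg1
    have h2 := hp g2 hg2
    rw [← p.mk_rep] at h1 h2
    rw [projMap, Projectivization.map_mk] at h1 h2
    rw [Projectivization.mk_eq_mk_iff'] at h1 h2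
    obtain ⟨c1, hc1⟩ := h1
    obtain ⟨c2, hc2⟩ := h2
    exact key ⟨p.rep, c1, c2, p.rep_nonzero, hc1.symm, hc2.symm⟩
  exact ⟨key, key2, fun ⟨p, _, hp⟩ => key2 ⟨p, hp⟩⟩
end
end

section
/- Let ι : ℂ⁵ → ℂ⁵ be the invertible linear map ι(x₁,x₂,x₃,x₄,x₅) = (x₃, x₄, x₁, x₂, −x₁−x₂−x₃−x₄−x₅). Then the quadratic form q = Σ_{1≤i≤j≤5} xᵢxⱼ satisfies q∘ι = q (so ι preserves X₂), and the subgroup Γ′ of GL(ℂ⁵) generated by g₁, g₂ and ι is isomorphic to the symmetric group 𝔖₅ and contains Γ as a subgroup of index 2. -/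
open Projectivization MvPolynomial

noncomputable section
set_option linter.unnecessarySeqFocus false

/-- ι(x₁,…,x₅) = (x₃, x₄, x₁, x₂, −x₁−x₂−x₃−x₄−x₅). -/
def iota : V5 ≃ₗ[ℂ] V5 where
  toFun x := ![x 2, x 3, x 0, x 1, -(x 0 + x 1 + x 2 + x 3 + x 4)]
  map_add' a b := by funext i; fin_cases i <;> simp <;> ring
  map_smul' c a := by funext i; fin_cases i <;> simp <;> ring
  invFun y := ![y 2, y 3, y 0, y 1, -(y 0 + y 1 + y 2 + y 3 + y 4)]
  left_inv x := by funext i; fin_cases i <;> simp <;> ring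
  right_inv y := by funext i; fin_cases i <;> simp <;> ring

/-- Γ′ = ⟨g₁, g₂, ι⟩ ⊂ GL(ℂ⁵). -/
def Gamma' : Subgroup (V5 ≃ₗ[ℂ] V5) := Subgroup.closure {g1, g2, iota}

set_option exponentiation.threshold 2000
set_option maxRecDepth 100000
set_option maxHeartbeats 4000000

def pvecN : Nat := 52985684971993520132981353915316556470249098119402739082849234044412656996665620626824318812477416667614117889720927611993526576497678748413728696058002256626302439679225420847618207187606698355161811172858404243907930134373929520991289999855931744891907793931270927878354392954720886212053084133385779243501940245031387736601568577930445268833308934452659908275597620010039306421920073977247806061303733919703172387009335441885766443062183962090963595803858151342225625780355180854543374876282845067326260057798289869570770440031561271274349416119607211132993736269602922529610014484298937196755505448496512431730682159647750582636107997996919473800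

def pinvN : Nat := 52985700047320892734678247526047509639556740110152370216612155558713568482551745432048242620455557836418501246170781407997853861997207295856433640530083361094958551307094411592174175989624238335765621556059324228069502080138705175195222511056446601565795487564051802310335069819433402021436267515617889961166549970554421089983311677426242628534277476592971674098431611597563014830312475038661492279228835622130657521671103982057433500252586687649522145563292374326867479343931850870537533838525587997287574383522018000566649779600682652447401611682534546966085733108659200146367511529219268085821458708377391494674481086186827210072797693255111591560

def pvec (r : Fin 120) (i : Fin 6) : Fin 6 :=
  ⟨pvecN / 8 ^ ((r : ℕ) * 6 + (i : ℕ)) % 8 % 6, Nat.mod_lt _ (by norm_num)⟩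

def pinv (r : Fin 120) (i : Fin 6) : Fin 6 :=
  ⟨pinvN / 8 ^ ((r : ℕ) * 6 + (i : ℕ)) % 8 % 6, Nat.mod_lt _ (by norm_num)⟩

lemma pvec_pinv : ∀ (r : Fin 120) (i : Fin 6), pinv r (pvec r i) = i := by decide

lemma pinv_pvec : ∀ (r : Fin 120) (i : Fin 6), pvec r (pinv r i) = i := by decide

def E6 (r : Fin 120) : Equiv.Perm (Fin 6) := ⟨pvec r, pinv r, pvec_pinv r, pinv_pvec r⟩

def rank (σ : Equiv.Perm (Fin 5)) : Fin 120 :=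
  ⟨((σ 0 : ℕ) * 24
    + ((σ 1 : ℕ) - (if (σ 0 : ℕ) < (σ 1 : ℕ) then 1 else 0)) * 6
    + ((σ 2 : ℕ) - ((if (σ 0 : ℕ) < (σ 2 : ℕ) then 1 else 0)
        + (if (σ 1 : ℕ) < (σ 2 : ℕ) then 1 else 0))) * 2
    + ((σ 3 : ℕ) - ((if (σ 0 : ℕ) < (σ 3 : ℕ) then 1 else 0)
        + (if (σ 1 : ℕ) < (σ 3 : ℕ) then 1 else 0)
        + (if (σ 2 : ℕ) < (σ 3 : ℕ) then 1 else 0)))) % 120,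
    Nat.mod_lt _ (by norm_num)⟩

def eP (σ : Equiv.Perm (Fin 5)) : Equiv.Perm (Fin 6) := E6 (rank σ)

def sig1 : Equiv.Perm (Fin 5) := Equiv.swap 1 2 * Equiv.swap 2 3
def sig2 : Equiv.Perm (Fin 5) := Equiv.swap 0 4 * Equiv.swap 4 3
def sig3 : Equiv.Perm (Fin 5) := Equiv.swap 1 4

lemma eP_one : eP 1 = 1 := by decide

lemma eP_ker : ∀ σ : Equiv.Perm (Fin 5), eP σ = 1 → σ = 1 := by decide

lemma eP_base : ∀ τ : Equiv.Perm (Fin 5),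
    eP (sig1 * τ) = eP sig1 * eP τ ∧ eP (sig2 * τ) = eP sig2 * eP τ ∧
    eP (sig3 * τ) = eP sig3 * eP τ := by decide

open Equiv Subgroup

-- c := sig2 * sig2 * sig1 * sig1 is a 5-cycle with c 1 = 4
def cyc5 : Equiv.Perm (Fin 5) := sig2 * sig2 * sig1 * sig1

lemma cyc5_isCycle : cyc5.IsCycle := by
  refine ⟨0, by decide, fun y hy => ?_⟩
  fin_cases y
  · exact ⟨0, by decide⟩
  · exact ⟨3, by decide⟩
  · exact ⟨2, by decide⟩
  · exact ⟨1, by decide⟩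
  · exact ⟨4, by decide⟩

lemma cyc5_support : cyc5.support = Finset.univ := by decide

lemma hTop : Subgroup.closure {sig1, sig2, sig3} = ⊤ := by
  have h5 := Equiv.Perm.closure_cycle_adjacent_swap cyc5_isCycle cyc5_support 1
  have hsw : Equiv.swap 1 (cyc5 1) = sig3 := by decide
  rw [hsw] at h5
  apply top_unique
  rw [← h5]
  apply Subgroup.closure_le _ |>.mpr
  intro x hx
  have hs1 : sig1 ∈ closure {sig1, sig2, sig3} := subset_closure (by simp)
  have hs2 : sig2 ∈ closure {sig1, sig2, sig3} := subset_closure (by simp)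
  have hs3 : sig3 ∈ closure {sig1, sig2, sig3} := subset_closure (by simp)
  rcases hx with rfl | rfl
  · exact mul_mem (mul_mem (mul_mem hs2 hs2) hs1) hs1
  · exact hs3

lemma eP_mul : ∀ σ τ : Equiv.Perm (Fin 5), eP (σ * τ) = eP σ * eP τ := by
  intro σ
  have hσ : σ ∈ Subgroup.closure {sig1, sig2, sig3} := hTop ▸ Subgroup.mem_top σ
  refine Subgroup.closure_induction (p := fun s _ => ∀ τ, eP (s * τ) = eP s * eP τ)
    ?_ ?_ ?_ ?_ hσ
  · intro x hx
    rcases hx with rfl | rfl | rfl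
    · exact fun τ => (eP_base τ).1
    · exact fun τ => (eP_base τ).2.1
    · exact fun τ => (eP_base τ).2.2
  · intro τ; rw [one_mul, eP_one, one_mul]
  · intro a b _ _ ha hb τ
    rw [mul_assoc, ha, hb, ha b, mul_assoc]
  · intro a _ ha τ
    have hainv : eP a⁻¹ = (eP a)⁻¹ := by
      have h1 := ha a⁻¹
      rw [mul_inv_cancel, eP_one] at h1
      exact (inv_eq_of_mul_eq_one_right h1.symm).symm
    have h2 := ha (a⁻¹ * τ)
    rw [← mul_assoc, mul_inv_cancel, one_mul] at h2
    rw [hainv]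
    rw [h2, ← mul_assoc, inv_mul_cancel, one_mul]

def eHom : Equiv.Perm (Fin 5) →* Equiv.Perm (Fin 6) := MonoidHom.mk' eP eP_mul


/-- extend x ∈ ℂ⁵ to a sum-zero vector in ℂ⁶ -/
def toSix (x : V5) : Fin 6 → ℂ := fun j =>
  if h : (j : ℕ) < 5 then x ⟨j, h⟩ else -(x 0 + x 1 + x 2 + x 3 + x 4)

lemma toSix_castSucc (x : V5) (i : Fin 5) : toSix x i.castSucc = x i := by
  have h : ((i.castSucc : Fin 6) : ℕ) < 5 := by simpa using i.isLt
  simp only [toSix, dif_pos h]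
  congr 1

lemma toSix_last (x : V5) : toSix x (Fin.last 5) = -(x 0 + x 1 + x 2 + x 3 + x 4) := by
  simp [toSix]

lemma toSix_sum (x : V5) : ∑ j, toSix x j = 0 := by
  rw [Fin.sum_univ_castSucc, toSix_last, Fin.sum_univ_five,
    toSix_castSucc, toSix_castSucc, toSix_castSucc, toSix_castSucc, toSix_castSucc]
  ring

def phiFun (σ : Equiv.Perm (Fin 6)) (x : V5) : V5 := fun i => toSix x (σ⁻¹ i.castSucc)

lemma toSix_phiFun (σ : Equiv.Perm (Fin 6)) (x : V5) (j : Fin 6) :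
    toSix (phiFun σ x) j = toSix x (σ⁻¹ j) := by
  induction j using Fin.lastCases with
  | cast i => rw [toSix_castSucc]; rfl
  | last =>
    have h0 : ∑ j : Fin 6, toSix x (σ⁻¹ j) = 0 := by
      rw [Equiv.sum_comp σ⁻¹ (toSix x)]; exact toSix_sum x
    rw [Fin.sum_univ_castSucc, Fin.sum_univ_five] at h0
    rw [toSix_last]
    show -(toSix x (σ⁻¹ (Fin.castSucc 0)) + toSix x (σ⁻¹ (Fin.castSucc 1)) +
      toSix x (σ⁻¹ (Fin.castSucc 2)) + toSix x (σ⁻¹ (Fin.castSucc 3)) +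
      toSix x (σ⁻¹ (Fin.castSucc 4))) = toSix x (σ⁻¹ (Fin.last 5))
    linear_combination -h0

lemma toSix_add (a b : V5) (j : Fin 6) : toSix (a + b) j = toSix a j + toSix b j := by
  by_cases h : (j : ℕ) < 5 <;> simp [toSix, h] <;> ring

lemma toSix_smul (c : ℂ) (a : V5) (j : Fin 6) : toSix (c • a) j = c * toSix a j := by
  by_cases h : (j : ℕ) < 5 <;> simp [toSix, h, smul_eq_mul] <;> ring

/-- the 5-dimensional representation of S₆ on V5 = {sum-zero vectors in ℂ⁶} -/
def phi : Equiv.Perm (Fin 6) →* (V5 ≃ₗ[ℂ] V5) where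
  toFun σ :=
    { toFun := phiFun σ
      map_add' := fun a b => funext fun i => by
        simp only [phiFun, Pi.add_apply]; exact toSix_add a b _
      map_smul' := fun c a => funext fun i => by
        simp only [phiFun, Pi.smul_apply, RingHom.id_apply, smul_eq_mul]
        exact toSix_smul c a _
      invFun := phiFun σ⁻¹
      left_inv := fun x => funext fun i => by
        show toSix (phiFun σ x) ((σ⁻¹)⁻¹ i.castSucc) = x i
        rw [inv_inv, toSix_phiFun, show σ⁻¹ (σ i.castSucc) = i.castSucc from σ.symm_apply_apply _, toSix_castSucc]
      right_inv := fun x => funext fun i => by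
        show toSix (phiFun σ⁻¹ x) (σ⁻¹ i.castSucc) = x i
        rw [toSix_phiFun, inv_inv, show σ (σ⁻¹ i.castSucc) = i.castSucc from σ.apply_symm_apply _, toSix_castSucc] }
  map_one' := by
    refine LinearEquiv.ext fun x => funext fun i => ?_
    show toSix x ((1 : Equiv.Perm (Fin 6))⁻¹ i.castSucc) = x i
    rw [inv_one, Equiv.Perm.one_apply, toSix_castSucc]
  map_mul' := fun σ τ => by
    refine LinearEquiv.ext fun x => funext fun i => ?_
    show toSix x ((σ * τ)⁻¹ i.castSucc) = toSix (phiFun τ x) (σ⁻¹ i.castSucc)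
    rw [toSix_phiFun, mul_inv_rev, Equiv.Perm.mul_apply]

lemma phi_ker : ∀ ρ : Equiv.Perm (Fin 6), phi ρ = 1 → ρ = 1 := by
  intro ρ h
  have hx : ∀ (x : V5) (i : Fin 5), toSix x (ρ⁻¹ i.castSucc) = x i := by
    intro x i
    have := LinearEquiv.ext_iff.mp h x
    exact congrFun this i
  have hfix : ∀ i : Fin 5, ρ⁻¹ i.castSucc = i.castSucc := by
    intro i
    have h1 : toSix (fun _ => (1 : ℂ)) (ρ⁻¹ i.castSucc) = 1 := hx _ i
    have hkl : ρ⁻¹ i.castSucc ≠ Fin.last 5 := by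
      intro hE
      rw [hE, toSix_last] at h1
      norm_num at h1
    obtain ⟨m, hm'⟩ := Fin.exists_castSucc_eq.mpr hkl
    have hm := hm'.symm
    have h2 := hx (Pi.single m (1 : ℂ)) i
    rw [hm, toSix_castSucc, Pi.single_eq_same] at h2
    have : m = i := by
      by_contra hne
      rw [Pi.single_eq_of_ne (Ne.symm hne)] at h2
      norm_num at h2
    rw [hm, this]
  have hlast : ρ⁻¹ (Fin.last 5) = Fin.last 5 := by
    by_contra hne
    obtain ⟨m, hm'⟩ := Fin.exists_castSucc_eq.mpr hne
    have heq : ρ⁻¹ (Fin.last 5) = ρ⁻¹ m.castSucc := by rw [hfix m, hm']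
    have hinj := (Equiv.injective ρ⁻¹) heq
    exact (Fin.castSucc_lt_last m).ne hinj.symm
  have hinv : ρ⁻¹ = 1 := by
    apply Equiv.ext
    intro j
    induction j using Fin.lastCases with
    | last => simpa using hlast
    | cast i => simpa using hfix i
  rw [← inv_inv ρ, hinv, inv_one]

def Phi : Equiv.Perm (Fin 5) →* (V5 ≃ₗ[ℂ] V5) := phi.comp eHom

lemma Phi_inj : Function.Injective Phi :=
  (injective_iff_map_eq_one Phi).mpr fun σ h => eP_ker σ (phi_ker (eP σ) h)

lemma hPhi1 : Phi sig1 = g1 := by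
  refine LinearEquiv.ext fun x => funext fun i => ?_
  fin_cases i <;> rfl

lemma hPhi2 : Phi sig2 = g2 := by
  refine LinearEquiv.ext fun x => funext fun i => ?_
  fin_cases i <;> rfl

lemma hPhi3 : Phi sig3 = iota := by
  refine LinearEquiv.ext fun x => funext fun i => ?_
  fin_cases i <;> rfl


lemma hPhiTop : Subgroup.map Phi ⊤ = Gamma' := by
  rw [← hTop, MonoidHom.map_closure]
  show Subgroup.closure (⇑Phi '' {sig1, sig2, sig3}) = Gamma'
  rw [Set.image_insert_eq, Set.image_insert_eq, Set.image_singleton, hPhi1, hPhi2, hPhi3]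
  rfl

lemma hrange : Phi.range = Gamma' := by
  rw [MonoidHom.range_eq_map]; exact hPhiTop

/-- the even part -/
def CC : Subgroup (Equiv.Perm (Fin 5)) := Subgroup.closure {sig1, sig2}

lemma hGmap : Subgroup.map Phi CC = Gamma := by
  rw [CC, MonoidHom.map_closure]
  show Subgroup.closure (⇑Phi '' {sig1, sig2}) = Gamma
  rw [Set.image_insert_eq, Set.image_singleton, hPhi1, hPhi2]
  rfl

lemma sign_sig1 : Equiv.Perm.sign sig1 = 1 := by
  rw [sig1, map_mul, Equiv.Perm.sign_swap (by decide), Equiv.Perm.sign_swap (by decide)]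
  norm_num

lemma sign_sig2 : Equiv.Perm.sign sig2 = 1 := by
  rw [sig2, map_mul, Equiv.Perm.sign_swap (by decide), Equiv.Perm.sign_swap (by decide)]
  norm_num

lemma sign_sig3 : Equiv.Perm.sign sig3 = -1 := by
  rw [sig3, Equiv.Perm.sign_swap (by decide)]

lemma hCA : CC ≤ alternatingGroup (Fin 5) := by
  rw [CC]
  apply (Subgroup.closure_le _).mpr
  intro x hx
  rcases hx with rfl | rfl
  · exact Equiv.Perm.mem_alternatingGroup.mpr sign_sig1
  · exact Equiv.Perm.mem_alternatingGroup.mpr sign_sig2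

lemma hs1m : sig1 ∈ CC := Subgroup.subset_closure (by simp)
lemma hs2m : sig2 ∈ CC := Subgroup.subset_closure (by simp)

lemma h31 : sig3 * sig1 * sig3⁻¹ = sig2⁻¹ * sig1⁻¹ * sig2 * sig1 := by decide
lemma h32 : sig3 * sig2 * sig3⁻¹ = sig2 * sig1 * sig2⁻¹ * sig1⁻¹ := by decide
lemma hs3sq : sig3 * sig3 = 1 := by decide

lemma conj_mem : ∀ h ∈ CC, sig3 * h * sig3⁻¹ ∈ CC := by
  intro h hh
  refine Subgroup.closure_induction (p := fun g _ => sig3 * g * sig3⁻¹ ∈ CC) ?_ ?_ ?_ ?_ hh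
  · intro x hx
    rcases hx with rfl | rfl
    · rw [h31]; exact mul_mem (mul_mem (mul_mem (inv_mem hs2m) (inv_mem hs1m)) hs2m) hs1m
    · rw [h32]; exact mul_mem (mul_mem (mul_mem hs2m hs1m) (inv_mem hs2m)) (inv_mem hs1m)
  · simpa using one_mem CC
  · intro a b _ _ pa pb
    have : sig3 * (a * b) * sig3⁻¹ = (sig3 * a * sig3⁻¹) * (sig3 * b * sig3⁻¹) := by group
    rw [this]; exact mul_mem pa pb
  · intro a _ pa
    have : sig3 * a⁻¹ * sig3⁻¹ = (sig3 * a * sig3⁻¹)⁻¹ := by group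
    rw [this]; exact inv_mem pa

lemma norm3 : sig3 ∈ Subgroup.normalizer (CC : Set (Equiv.Perm (Fin 5))) := by
  rw [Subgroup.mem_normalizer_iff]
  intro h
  constructor
  · exact conj_mem h
  · intro hc
    have h2 := conj_mem _ hc
    have key : sig3 * (sig3 * h * sig3⁻¹) * sig3⁻¹ = (sig3 * sig3) * h * (sig3 * sig3)⁻¹ := by
      group
    rw [key, hs3sq] at h2
    simpa using h2

lemma hNorm : CC.Normal := by
  apply Subgroup.normalizer_eq_top_iff.mp
  apply top_unique
  rw [← hTop]
  apply (Subgroup.closure_le _).mpr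
  intro x hx
  rcases hx with rfl | rfl | rfl
  · exact CC.le_normalizer hs1m
  · exact CC.le_normalizer hs2m
  · exact norm3

lemma CC_index : CC.index = 2 := by
  haveI := hNorm
  set x : Equiv.Perm (Fin 5) ⧸ CC := QuotientGroup.mk sig3 with hxdef
  have hx2 : x ^ 2 = 1 := by
    rw [pow_two, hxdef, ← QuotientGroup.mk_mul, hs3sq, QuotientGroup.mk_one]
  have hx1 : x ≠ 1 := by
    intro h
    have h3 : sig3 ∈ CC := (QuotientGroup.eq_one_iff sig3).mp h
    have := Equiv.Perm.mem_alternatingGroup.mp (hCA h3)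
    rw [sign_sig3] at this
    exact absurd this (by decide)
  have horder : orderOf x = 2 := orderOf_eq_prime hx2 hx1
  have hmk : ∀ σ : Equiv.Perm (Fin 5),
      (QuotientGroup.mk σ : Equiv.Perm (Fin 5) ⧸ CC) ∈ Subgroup.zpowers x := by
    intro σ
    have hσ : σ ∈ Subgroup.closure {sig1, sig2, sig3} := hTop ▸ Subgroup.mem_top σ
    refine Subgroup.closure_induction
      (p := fun s _ => (QuotientGroup.mk s : Equiv.Perm (Fin 5) ⧸ CC) ∈ Subgroup.zpowers x)
      ?_ ?_ ?_ ?_ hσ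
    · intro y hy
      rcases hy with rfl | rfl | rfl
      · show (QuotientGroup.mk sig1 : Equiv.Perm (Fin 5) ⧸ CC) ∈ Subgroup.zpowers x
        rw [(QuotientGroup.eq_one_iff sig1).mpr hs1m]; exact one_mem _
      · show (QuotientGroup.mk sig2 : Equiv.Perm (Fin 5) ⧸ CC) ∈ Subgroup.zpowers x
        rw [(QuotientGroup.eq_one_iff sig2).mpr hs2m]; exact one_mem _
      · exact Subgroup.mem_zpowers x
    · show (QuotientGroup.mk 1 : Equiv.Perm (Fin 5) ⧸ CC) ∈ Subgroup.zpowers x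
      rw [QuotientGroup.mk_one]; exact one_mem _
    · intro a b _ _ pa pb
      show (QuotientGroup.mk (a * b) : Equiv.Perm (Fin 5) ⧸ CC) ∈ Subgroup.zpowers x
      rw [QuotientGroup.mk_mul]; exact mul_mem pa pb
    · intro a _ pa
      show (QuotientGroup.mk a⁻¹ : Equiv.Perm (Fin 5) ⧸ CC) ∈ Subgroup.zpowers x
      rw [QuotientGroup.mk_inv]; exact inv_mem pa
  have hzt : Subgroup.zpowers x = ⊤ := by
    apply (Subgroup.eq_top_iff' _).mpr
    intro q
    obtain ⟨σ, rfl⟩ := QuotientGroup.mk_surjective q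
    exact hmk σ
  show Nat.card (Equiv.Perm (Fin 5) ⧸ CC) = 2
  calc Nat.card (Equiv.Perm (Fin 5) ⧸ CC)
      = Nat.card (⊤ : Subgroup (Equiv.Perm (Fin 5) ⧸ CC)) := (Subgroup.card_top).symm
    _ = Nat.card (Subgroup.zpowers x) := by rw [hzt]
    _ = orderOf x := Nat.card_zpowers x
    _ = 2 := horder

/-- ι preserves the quadratic form q (hence the quadric X₂), and Γ′ = ⟨g₁, g₂, ι⟩ is
isomorphic to 𝔖₅ and contains Γ as a subgroup of index 2. -/
theorem statement19 :
    (∀ v : V5, qQ (iota v) = qQ v) ∧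
    Nonempty (Gamma' ≃* Equiv.Perm (Fin 5)) ∧
    Gamma ≤ Gamma' ∧ Subgroup.relIndex Gamma Gamma' = 2 := by
  refine ⟨?_, ?_, ?_, ?_⟩
  · intro v
    show qQ ![v 2, v 3, v 0, v 1, -(v 0 + v 1 + v 2 + v 3 + v 4)] = qQ v
    simp [qQ, Fin.sum_univ_five]
    ring
  · exact ⟨(MulEquiv.subgroupCongr hrange).symm.trans (MonoidHom.ofInjective Phi_inj).symm⟩
  · exact Subgroup.closure_mono
      (Set.insert_subset_insert (Set.singleton_subset_iff.mpr (Set.mem_insert _ _)))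
  · have h1 : Subgroup.comap Phi Gamma = CC := by
      rw [← hGmap, Subgroup.comap_map_eq_self_of_injective Phi_inj]
    have h2 : (Subgroup.comap Phi Gamma).relIndex ⊤ = Gamma.relIndex (Subgroup.map Phi ⊤) :=
      Subgroup.relIndex_comap _ _ _
    rw [h1, Subgroup.relIndex_top_right, hPhiTop] at h2
    rw [← h2, CC_index]
end
end
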